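/- arXiv:2311.08436 — 3 statements merged into one kernel-verified Lean document; each statement's English description precedes it below -/
import Mathlib

section
/- For every n with f(n) ≥ 2 (equivalently n ≠ 1), every coarse (f(n)−1)-wiring of X_n into Y has volume at least 2·2^{2^{2n+1}} + 1. -/
open SimpleGraph

/-- A wiring of `G` into `H`: a map on vertices together with, for each edge
(given by an ordered adjacent pair, compatibly with reversal), a walk in `H`
joining the images of the endpoints. -/
structure Wiring {V : Type*} {W : Type*} (G : SimpleGraph V) (H : SimpleGraph W) where
  toFun : V → W
  walk : ∀ u v : V, G.Adj u v → H.Walk (toFun u) (toFun v)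
  walk_symm : ∀ (u v : V) (h : G.Adj u v), walk v u (G.adj_symm h) = (walk u v h).reverse

namespace Wiring

variable {V : Type*} {W : Type*} {G : SimpleGraph V} {H : SimpleGraph W}

/-- A wiring is a coarse `k`-wiring if the vertex map is at most `k`-to-one and
every edge of `H` lies on at most `k` of the chosen walks.  (Since walks are
indexed by *ordered* adjacent pairs, with the walk of `(v,u)` the reverse of the
walk of `(u,v)`, each edge of `G` is counted twice; hence the bound `2 * k`.) -/
def IsCoarse (Wr : Wiring G H) (k : ℕ) : Prop :=
  (∀ w : W, {v : V | Wr.toFun v = w}.ncard ≤ k) ∧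
  (∀ e : Sym2 W, e ∈ H.edgeSet →
    {p : V × V | ∃ h : G.Adj p.1 p.2, e ∈ (Wr.walk p.1 p.2 h).edges}.ncard ≤ 2 * k)

/-- The vertices of the image of a wiring. -/
def imageVerts (Wr : Wiring G H) : Set W :=
  Set.range Wr.toFun ∪ {w : W | ∃ (u v : V) (h : G.Adj u v), w ∈ (Wr.walk u v h).support}

/-- The volume of a wiring: the number of vertices of its image. -/
noncomputable def volume (Wr : Wiring G H) : ℕ := Wr.imageVerts.ncard

/-- The image of a wiring, as a subgraph of the target. -/
def imageSubgraph (Wr : Wiring G H) : H.Subgraph where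
  verts := Wr.imageVerts
  Adj w w' := ∃ (u v : V) (h : G.Adj u v), (Wr.walk u v h).toSubgraph.Adj w w'
  adj_sub := by
    rintro a b ⟨u, v, h, ha⟩
    exact (Wr.walk u v h).toSubgraph.adj_sub ha
  edge_vert := by
    rintro a b ⟨u, v, h, ha⟩
    refine Or.inr ⟨u, v, h, ?_⟩
    have := (Wr.walk u v h).toSubgraph.edge_vert ha
    rwa [SimpleGraph.Walk.verts_toSubgraph] at this
  symm := by
    constructor
    rintro a b ⟨u, v, h, ha⟩
    exact ⟨u, v, h, ha.symm⟩

end Wiring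

/-- `wir k G H` : the minimal volume of a coarse `k`-wiring of `G` into `H`
(`⊤` if there is none). -/
noncomputable def wir {V : Type*} {W : Type*} (k : ℕ)
    (G : SimpleGraph V) (H : SimpleGraph W) : ℕ∞ :=
  sInf {N : ℕ∞ | ∃ Wr : Wiring G H, Wr.IsCoarse k ∧ N = (Wr.volume : ℕ∞)}

/-- The `k`-wiring profile of `X` into `H`. -/
noncomputable def wirProfile {V : Type*} {W : Type*}
    (X : SimpleGraph V) (H : SimpleGraph W) (k n : ℕ) : ℕ∞ :=
  sSup {N : ℕ∞ | ∃ Γ : X.Subgraph, Γ.verts.Finite ∧ Γ.verts.ncard ≤ n ∧ N = wir k Γ.coe H}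

/-- One-directional adjacency generating the 2-dimensional integer grid. -/
def gridStep (p q : ℤ × ℤ) : Prop :=
  (p.1 = q.1 ∧ q.2 = p.2 + 1) ∨ (p.2 = q.2 ∧ q.1 = p.1 + 1)

/-- The 2-dimensional integer grid: vertices `ℤ²`, edges between points at distance 1. -/
def grid : SimpleGraph (ℤ × ℤ) where
  Adj p q := p ≠ q ∧ (gridStep p q ∨ gridStep q p)
  symm := ⟨fun p q h => ⟨h.1.symm, h.2.symm⟩⟩
  loopless := ⟨fun p h => h.1 rfl⟩

/-- One-directional adjacency for the column graphs: vertical steps everywhere,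
horizontal steps at heights divisible by `t`. -/
def colStep (t : ℕ) (p q : ℕ × ℕ) : Prop :=
  (p.1 = q.1 ∧ q.2 = p.2 + 1) ∨ (p.2 = q.2 ∧ t ∣ p.2 ∧ q.1 = p.1 + 1)

/-- Vertices of `X_n`. -/
def XVert (f : ℕ → ℕ) (n : ℕ) : Type :=
  {p : ℕ × ℕ // p.1 < f n ∧ p.2 ≤ 2 ^ 2 ^ (2 * n) * f n}

/-- The graph `X_n`. -/
def Xgraph (f : ℕ → ℕ) (n : ℕ) : SimpleGraph (XVert f n) where
  Adj u v := u ≠ v ∧ (colStep (2 ^ 2 ^ (2 * n)) u.val v.val ∨ colStep (2 ^ 2 ^ (2 * n)) v.val u.val)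
  symm := ⟨fun u v h => ⟨h.1.symm, h.2.symm⟩⟩
  loopless := ⟨fun u h => h.1 rfl⟩

/-- Vertices of `Y_n`. -/
def YVert (f : ℕ → ℕ) (n : ℕ) : Type :=
  {p : ℕ × ℕ // p.1 < f n ∧ p.2 ≤ 2 ^ 2 ^ (2 * n + 1) * f n}

/-- The graph `Y_n`. -/
def Ygraph (f : ℕ → ℕ) (n : ℕ) : SimpleGraph (YVert f n) where
  Adj u v := u ≠ v ∧
    (colStep (2 ^ 2 ^ (2 * n + 1)) u.val v.val ∨ colStep (2 ^ 2 ^ (2 * n + 1)) v.val u.val)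
  symm := ⟨fun u v h => ⟨h.1.symm, h.2.symm⟩⟩
  loopless := ⟨fun u h => h.1 rfl⟩

/-- Vertices of `X = ⨆ (n ≥ 1) X_n`: triples `(n, i, j)` with `(i,j)` a vertex of `X_n`. -/
def XTVert (f : ℕ → ℕ) : Type :=
  {p : ℕ × ℕ × ℕ // 1 ≤ p.1 ∧ p.2.1 < f p.1 ∧ p.2.2 ≤ 2 ^ 2 ^ (2 * p.1) * f p.1}

/-- The graph `X`, the disjoint union of the `X_n` for `n ≥ 1`. -/
def Xtotal (f : ℕ → ℕ) : SimpleGraph (XTVert f) where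
  Adj u v := u ≠ v ∧ u.val.1 = v.val.1 ∧
    (colStep (2 ^ 2 ^ (2 * u.val.1)) u.val.2 v.val.2 ∨
     colStep (2 ^ 2 ^ (2 * u.val.1)) v.val.2 u.val.2)
  symm := ⟨fun u v h => ⟨h.1.symm, h.2.1.symm, by rw [← h.2.1]; exact h.2.2.symm⟩⟩
  loopless := ⟨fun u h => h.1 rfl⟩

/-- Vertices of `Y = ⨆ (n ≥ 1) Y_n`. -/
def YTVert (f : ℕ → ℕ) : Type :=
  {p : ℕ × ℕ × ℕ // 1 ≤ p.1 ∧ p.2.1 < f p.1 ∧ p.2.2 ≤ 2 ^ 2 ^ (2 * p.1 + 1) * f p.1}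

/-- The graph `Y`, the disjoint union of the `Y_n` for `n ≥ 1`. -/
def Ytotal (f : ℕ → ℕ) : SimpleGraph (YTVert f) where
  Adj u v := u ≠ v ∧ u.val.1 = v.val.1 ∧
    (colStep (2 ^ 2 ^ (2 * u.val.1 + 1)) u.val.2 v.val.2 ∨
     colStep (2 ^ 2 ^ (2 * u.val.1 + 1)) v.val.2 u.val.2)
  symm := ⟨fun u v h => ⟨h.1.symm, h.2.1.symm, by rw [← h.2.1]; exact h.2.2.symm⟩⟩
  loopless := ⟨fun u h => h.1 rfl⟩


/-! ### Auxiliary lemmas -/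

section Aux

variable {V : Type*}

lemma flip_exists (q : ℕ → Prop) : ∀ (d j : ℕ), q j → ¬ q (j + d) →
    ∃ i, j ≤ i ∧ i < j + d ∧ q i ∧ ¬ q (i + 1) := by
  intro d
  induction d with
  | zero => intro j h1 h2; exact absurd h1 (by simpa using h2)
  | succ d ih =>
    intro j h1 h2
    by_cases h : q (j + d)
    · exact ⟨j + d, by omega, by omega, h, by rwa [show j + d + 1 = j + (d+1) by omega]⟩
    · obtain ⟨i, h3, h4, h5, h6⟩ := ih j h1 h
      exact ⟨i, h3, by omega, h5, h6⟩

lemma reach_split_walk {G : SimpleGraph V} (a b : V) : ∀ {y : V} (_ : G.Walk y a),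
    (G \ fromEdgeSet {s(a,b)}).Reachable y a ∨ (G \ fromEdgeSet {s(a,b)}).Reachable y b
  | _, SimpleGraph.Walk.nil => Or.inl (Reachable.refl _)
  | y, SimpleGraph.Walk.cons (v := c) h p => by
    by_cases he : s(y, c) = s(a, b)
    · rw [Sym2.eq_iff] at he
      rcases he with ⟨rfl, rfl⟩ | ⟨rfl, rfl⟩
      · exact Or.inl (Reachable.refl _)
      · exact Or.inr (Reachable.refl _)
    · have hadj : (G \ fromEdgeSet {s(a,b)}).Adj y c := by
        rw [sdiff_adj, fromEdgeSet_adj]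
        exact ⟨h, by tauto⟩
      rcases reach_split_walk a b p with h' | h'
      · exact Or.inl (hadj.reachable.trans h')
      · exact Or.inr (hadj.reachable.trans h')

lemma reach_split {G : SimpleGraph V} {a b : V} (z : V)
    (hr : G.Reachable a z) :
    (G \ fromEdgeSet {s(a,b)}).Reachable a z ∨ (G \ fromEdgeSet {s(a,b)}).Reachable b z := by
  obtain ⟨p⟩ := hr
  rcases reach_split_walk a b p.reverse with h | h
  · exact Or.inl h.symm
  · exact Or.inr h.symm

lemma cycle_two_edges {G : SimpleGraph V} [DecidableEq V] {z : V} (c : G.Walk z z)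
    (hc : c.IsCycle) {x : V} (hx : x ∈ c.support) :
    ∃ u1 u2, u1 ≠ u2 ∧ G.Adj x u1 ∧ G.Adj x u2 ∧ s(x,u1) ∈ c.edges ∧ s(x,u2) ∈ c.edges := by
  by_cases hxz : x = z
  · subst hxz
    cases c with
    | nil => exact absurd hc.three_le_length (by simp)
    | @cons _ u1 _ h q =>
      have h3 := hc.three_le_length
      cases hq : q.reverse with
      | nil =>
        exfalso
        have : q.length = 0 := by
          have := congrArg SimpleGraph.Walk.length hq
          simpa using this
        simp [SimpleGraph.Walk.length_cons, this] at h3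
      | @cons _ u2 _ h2 q2 =>
        have h2' : G.Adj x u2 := h2
        have he2 : s(x, u2) ∈ q.edges := by
          have : s(x,u2) ∈ q.reverse.edges := by rw [hq]; simp
          rwa [SimpleGraph.Walk.edges_reverse, List.mem_reverse] at this
        have hnd := hc.edges_nodup
        rw [SimpleGraph.Walk.edges_cons] at hnd
        have hne : s(x,u1) ∉ q.edges := (List.nodup_cons.mp hnd).1
        refine ⟨u1, u2, ?_, h, h2', by simp, by simp [he2]⟩
        rintro rfl
        exact hne he2
  · have hx' := hx
    have hsplit := c.take_spec hx
    set p1 := c.takeUntil x hx with hp1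
    set p2 := c.dropUntil x hx with hp2
    have hz1 : z ≠ x := fun h => hxz h.symm
    cases hq1 : p1.reverse with
    | nil =>
      exfalso
      have h0 : p1.length = 0 := by
        have := congrArg SimpleGraph.Walk.length hq1
        simpa using this
      exact hz1 (SimpleGraph.Walk.eq_of_length_eq_zero h0)
    | @cons _ u1 _ h1 q1 =>
      cases hq2 : p2 with
      | nil => exact absurd rfl hxz
      | @cons _ u2 _ h2 q2 =>
        have he1 : s(x, u1) ∈ p1.edges := by
          have : s(x,u1) ∈ p1.reverse.edges := by rw [hq1]; simp
          rwa [SimpleGraph.Walk.edges_reverse, List.mem_reverse] at this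
        have he2 : s(x, u2) ∈ p2.edges := by rw [hq2]; simp
        have hdisj : ∀ e ∈ p1.edges, e ∉ p2.edges := by
          have hnd := hc.edges_nodup
          rw [← hsplit, SimpleGraph.Walk.edges_append] at hnd
          exact fun e he => (List.disjoint_of_nodup_append hnd) he
        refine ⟨u1, u2, ?_, h1, h2, ?_, ?_⟩
        · rintro rfl
          exact hdisj _ he1 he2
        · rw [← hsplit, SimpleGraph.Walk.edges_append]; exact List.mem_append_left _ he1
        · rw [← hsplit, SimpleGraph.Walk.edges_append]; exact List.mem_append_right _ he2

end Aux

section YAux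

variable {f : ℕ → ℕ}

def hgt (z : YTVert f) : ℕ := z.val.2.2
def colY (z : YTVert f) : ℕ := z.val.2.1

def upCount {G : SimpleGraph (YTVert f)} {a b : YTVert f} (p : G.Walk a b) : ℕ :=
  p.darts.countP (fun d => decide (hgt d.snd = hgt d.fst + 1))
def downCount {G : SimpleGraph (YTVert f)} {a b : YTVert f} (p : G.Walk a b) : ℕ :=
  p.darts.countP (fun d => decide (hgt d.fst = hgt d.snd + 1))
def flatCount {G : SimpleGraph (YTVert f)} {a b : YTVert f} (p : G.Walk a b) : ℕ :=
  p.darts.countP (fun d => decide (hgt d.fst = hgt d.snd))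

lemma ytotal_adj_decomp {u v : YTVert f} (h : (Ytotal f).Adj u v) :
    u.val.1 = v.val.1 ∧
    ((colY u = colY v ∧ (hgt v = hgt u + 1 ∨ hgt u = hgt v + 1)) ∨
     (hgt u = hgt v ∧ 2 ^ 2 ^ (2 * u.val.1 + 1) ∣ hgt u ∧
       (colY v = colY u + 1 ∨ colY u = colY v + 1))) := by
  obtain ⟨hne, hco, hstep⟩ := h
  refine ⟨hco, ?_⟩
  unfold colStep at hstep
  unfold hgt colY
  rcases hstep with (⟨h1, h2⟩ | ⟨h1, h2, h3⟩) | (⟨h1, h2⟩ | ⟨h1, h2, h3⟩)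
  · exact Or.inl ⟨h1, Or.inl h2⟩
  · exact Or.inr ⟨h1, h2, Or.inl h3⟩
  · exact Or.inl ⟨h1.symm, Or.inr h2⟩
  · exact Or.inr ⟨h1.symm, by rw [← h1]; exact h2, Or.inr h3⟩

lemma up_sub_down {G : SimpleGraph (YTVert f)} (hle : G ≤ Ytotal f)
    {a b : YTVert f} (p : G.Walk a b) :
    (upCount p : ℤ) - downCount p = (hgt b : ℤ) - hgt a := by
  induction p with
  | nil => simp [upCount, downCount]
  | @cons u c _ h q ih =>
    have hd := (ytotal_adj_decomp (hle h)).2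
    unfold upCount downCount at *
    rw [SimpleGraph.Walk.darts_cons, List.countP_cons, List.countP_cons]
    simp only [decide_eq_true_eq]
    rcases hd with ⟨_, hv | hv⟩ | ⟨hv, _, _⟩ <;>
    · split_ifs <;> push_cast <;> omega

lemma length_eq_three_counts {G : SimpleGraph (YTVert f)} (hle : G ≤ Ytotal f)
    {a b : YTVert f} (p : G.Walk a b) :
    p.length = upCount p + downCount p + flatCount p := by
  induction p with
  | nil => simp [upCount, downCount, flatCount]
  | @cons u c _ h q ih =>
    have hd := (ytotal_adj_decomp (hle h)).2
    unfold upCount downCount flatCount at *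
    rw [SimpleGraph.Walk.length_cons, SimpleGraph.Walk.darts_cons,
      List.countP_cons, List.countP_cons, List.countP_cons]
    simp only [decide_eq_true_eq]
    rcases hd with ⟨_, hv | hv⟩ | ⟨hv, _, _⟩ <;>
    · split_ifs <;> omega

lemma upCount_ge {G : SimpleGraph (YTVert f)} (hle : G ≤ Ytotal f)
    {a b : YTVert f} (p : G.Walk a b) : (hgt b : ℤ) - hgt a ≤ (upCount p : ℤ) := by
  have := up_sub_down hle p
  have : (0:ℤ) ≤ downCount p := Int.natCast_nonneg _
  omega

lemma upCount_append {G : SimpleGraph (YTVert f)} {a b c : YTVert f}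
    (p : G.Walk a b) (q : G.Walk b c) :
    upCount (p.append q) = upCount p + upCount q := by
  unfold upCount
  rw [SimpleGraph.Walk.darts_append, List.countP_append]


lemma walk_coord_const {f : ℕ → ℕ} {G : SimpleGraph (YTVert f)} (hle : G ≤ Ytotal f)
    {a b : YTVert f} (p : G.Walk a b) : ∀ z ∈ p.support, z.val.1 = a.val.1 := by
  induction p with
  | nil => intro z hz; simp at hz; rw [hz]
  | cons h q ih =>
    intro z hz
    rw [SimpleGraph.Walk.support_cons] at hz
    rcases List.mem_cons.mp hz with rfl | hz
    · rfl
    · rw [ih z hz, (ytotal_adj_decomp (hle h)).1]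

lemma yext {f : ℕ → ℕ} {u v : YTVert f} (h1 : u.val.1 = v.val.1) (h2 : colY u = colY v)
    (h3 : hgt u = hgt v) : u = v := by
  apply Subtype.ext
  have := u.val.2.2
  ext
  · exact h1
  · exact h2
  · exact h3

lemma cycle_length_ge {f : ℕ → ℕ} {G : SimpleGraph (YTVert f)} (hle : G ≤ Ytotal f)
    {z : YTVert f} (c : G.Walk z z) (hc : c.IsCycle) :
    2 * 2 ^ 2 ^ (2 * z.val.1 + 1) + 1 ≤ c.length := by
  classical
  set T := 2 ^ 2 ^ (2 * z.val.1 + 1) with hT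
  have hcoord : ∀ x ∈ c.support, x.val.1 = z.val.1 := walk_coord_const hle c
  have hsne : c.support.toFinset.Nonempty :=
    ⟨z, List.mem_toFinset.mpr c.start_mem_support⟩
  obtain ⟨vp, hvp', hvpmax⟩ := Finset.exists_max_image c.support.toFinset hgt hsne
  obtain ⟨vm, hvm', hvmmin⟩ := Finset.exists_min_image c.support.toFinset hgt hsne
  rw [List.mem_toFinset] at hvp' hvm'
  have hmax : ∀ x ∈ c.support, hgt x ≤ hgt vp := fun x hx => hvpmax x (List.mem_toFinset.mpr hx)
  have hmin : ∀ x ∈ c.support, hgt vm ≤ hgt x := fun x hx => hvmmin x (List.mem_toFinset.mpr hx)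
  -- not all at the same height
  have hflatne : hgt vm ≠ hgt vp := by
    intro hfl
    have hallflat : ∀ x ∈ c.support, hgt x = hgt vp := fun x hx =>
      le_antisymm (hmax x hx) (hfl ▸ hmin x hx)
    obtain ⟨cp, hcp', hcpmax⟩ := Finset.exists_max_image c.support.toFinset colY hsne
    rw [List.mem_toFinset] at hcp'
    obtain ⟨w1, w2, hne', hb1, hb2, hf1, hf2⟩ := cycle_two_edges c hc hcp'
    have hw1 : w1 ∈ c.support := SimpleGraph.Walk.snd_mem_support_of_mem_edges c hf1
    have hw2 : w2 ∈ c.support := SimpleGraph.Walk.snd_mem_support_of_mem_edges c hf2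
    have key : ∀ w, w ∈ c.support → (Ytotal f).Adj cp w → colY w + 1 = colY cp := by
      intro w hw hadj
      have hd := ytotal_adj_decomp hadj
      have h1 := hallflat w hw
      have h2 := hallflat cp hcp'
      have h3 := hcpmax w (List.mem_toFinset.mpr hw)
      rcases hd.2 with ⟨_, hv | hv⟩ | ⟨_, _, hv | hv⟩ <;> omega
    have e1 := key w1 hw1 (hle hb1)
    have e2 := key w2 hw2 (hle hb2)
    exact hne' (yext ((hcoord w1 hw1).trans (hcoord w2 hw2).symm) (by omega)
      ((hallflat w1 hw1).trans (hallflat w2 hw2).symm))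
  -- analysis at an extremal vertex
  have hana : ∀ v, v ∈ c.support → ∀ u, u ∈ c.support → (Ytotal f).Adj v u →
      (colY u = colY v ∧ (hgt u = hgt v + 1 ∨ hgt v = hgt u + 1)) ∨
      (hgt u = hgt v ∧ T ∣ hgt v) := by
    intro v hv u hu hadj
    have hd := ytotal_adj_decomp hadj
    have hcv := hcoord v hv
    rcases hd.2 with ⟨hcol, hv' | hv'⟩ | ⟨hfl, hdv, _⟩
    · exact Or.inl ⟨hcol.symm, Or.inl hv'⟩
    · exact Or.inl ⟨hcol.symm, Or.inr hv'⟩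
    · exact Or.inr ⟨hfl.symm, by rw [hT, ← hcv]; exact hdv⟩
  -- at the max vertex: divisibility and a flat edge
  obtain ⟨u1, u2, hne, ha1, ha2, he1, he2⟩ := cycle_two_edges c hc hvp'
  have hu1s : u1 ∈ c.support := SimpleGraph.Walk.snd_mem_support_of_mem_edges c he1
  have hu2s : u2 ∈ c.support := SimpleGraph.Walk.snd_mem_support_of_mem_edges c he2
  have hdvp : T ∣ hgt vp ∧ ∃ u, hgt u = hgt vp ∧ s(vp, u) ∈ c.edges := by
    rcases hana vp hvp' u1 hu1s (hle ha1) with ⟨hc1, hh1⟩ | ⟨hh1, hd1⟩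
    · rcases hana vp hvp' u2 hu2s (hle ha2) with ⟨hc2, hh2⟩ | ⟨hh2, hd2⟩
      · exfalso
        have m1 := hmax u1 hu1s
        have m2 := hmax u2 hu2s
        exact hne (yext ((hcoord u1 hu1s).trans (hcoord u2 hu2s).symm)
          (hc1.trans hc2.symm) (by omega))
      · exact ⟨hd2, u2, hh2, he2⟩
    · exact ⟨hd1, u1, hh1, he1⟩
  -- at the min vertex: divisibility
  obtain ⟨w1, w2, hne2, hb1, hb2, hg1, hg2⟩ := cycle_two_edges c hc hvm'
  have hw1s : w1 ∈ c.support := SimpleGraph.Walk.snd_mem_support_of_mem_edges c hg1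
  have hw2s : w2 ∈ c.support := SimpleGraph.Walk.snd_mem_support_of_mem_edges c hg2
  have hdvm : T ∣ hgt vm := by
    rcases hana vm hvm' w1 hw1s (hle hb1) with ⟨hc1, hh1⟩ | ⟨hh1, hd1⟩
    · rcases hana vm hvm' w2 hw2s (hle hb2) with ⟨hc2, hh2⟩ | ⟨hh2, hd2⟩
      · exfalso
        have m1 := hmin w1 hw1s
        have m2 := hmin w2 hw2s
        exact hne2 (yext ((hcoord w1 hw1s).trans (hcoord w2 hw2s).symm)
          (hc1.trans hc2.symm) (by omega))
      · exact hd2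
    · exact hd1
  -- vertical gap is at least T
  have hgap : hgt vm + T ≤ hgt vp := by
    have hlt : hgt vm < hgt vp := lt_of_le_of_ne (hmin vp hvp') hflatne
    have hdiff : T ∣ (hgt vp - hgt vm) := Nat.dvd_sub hdvp.1 hdvm
    have := Nat.le_of_dvd (by omega) hdiff
    omega
  -- at least one flat dart
  have hF : 1 ≤ flatCount c := by
    obtain ⟨u, hu, he⟩ := hdvp.2
    have he' : s(vp, u) ∈ c.darts.map SimpleGraph.Dart.edge := he
    obtain ⟨d, hd, hde⟩ := List.mem_map.mp he'
    have hde' : s(d.toProd.1, d.toProd.2) = s(vp, u) := by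
      rw [← hde]; rfl
    rw [Sym2.eq_iff] at hde'
    have hflat : hgt d.toProd.1 = hgt d.toProd.2 := by
      rcases hde' with ⟨h1, h2⟩ | ⟨h1, h2⟩ <;> rw [h1, h2] <;> omega
    unfold flatCount
    rw [Nat.succ_le_iff]
    exact List.countP_pos_iff.mpr ⟨d, hd, by simpa using hflat⟩
  -- upCount is at least the gap
  have hUge : (hgt vp : ℤ) - hgt vm ≤ (upCount c : ℤ) := by
    have hsplit := c.take_spec hvm'
    have hupc : upCount c = upCount (c.takeUntil vm hvm') + upCount (c.dropUntil vm hvm') := by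
      conv_lhs => rw [← hsplit]
      exact upCount_append _ _
    have hvpmem : vp ∈ (c.takeUntil vm hvm').support ∨ vp ∈ (c.dropUntil vm hvm').support := by
      rw [← SimpleGraph.Walk.mem_support_append_iff, hsplit]
      exact hvp'
    rcases hvpmem with hmem | hmem
    · have hsp2 := (c.takeUntil vm hvm').take_spec hmem
      have h2 : upCount (c.takeUntil vm hvm') =
          upCount ((c.takeUntil vm hvm').takeUntil vp hmem) +
          upCount ((c.takeUntil vm hvm').dropUntil vp hmem) := by
        conv_lhs => rw [← hsp2]
        exact upCount_append _ _
      have g1 := upCount_ge hle ((c.takeUntil vm hvm').takeUntil vp hmem)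
      have g2 := upCount_ge hle (c.dropUntil vm hvm')
      have g3 : (0:ℤ) ≤ upCount ((c.takeUntil vm hvm').dropUntil vp hmem) := Int.natCast_nonneg _
      omega
    · have hsp2 := (c.dropUntil vm hvm').take_spec hmem
      have h2 : upCount (c.dropUntil vm hvm') =
          upCount ((c.dropUntil vm hvm').takeUntil vp hmem) +
          upCount ((c.dropUntil vm hvm').dropUntil vp hmem) := by
        conv_lhs => rw [← hsp2]
        exact upCount_append _ _
      have g1 := upCount_ge hle ((c.dropUntil vm hvm').takeUntil vp hmem)
      have g3 : (0:ℤ) ≤ upCount ((c.dropUntil vm hvm').dropUntil vp hmem) := Int.natCast_nonneg _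
      have g4 : (0:ℤ) ≤ upCount (c.takeUntil vm hvm') := Int.natCast_nonneg _
      omega
  have hud := up_sub_down hle c
  have hlen := length_eq_three_counts hle c
  have hTpos : (T:ℤ) ≤ (hgt vp : ℤ) - hgt vm := by push_cast; omega
  omega
end YAux


section XAux

variable {f : ℕ → ℕ} {n : ℕ}

lemma xext {u v : XVert f n} (h1 : u.val.1 = v.val.1) (h2 : u.val.2 = v.val.2) : u = v := by
  apply Subtype.ext
  ext
  · exact h1
  · exact h2

lemma xvert_finite (f : ℕ → ℕ) (n : ℕ) : Finite (XVert f n) := by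
  apply Finite.of_injective
    (fun v : XVert f n => ((⟨v.val.1, v.2.1⟩ : Fin (f n)),
      (⟨v.val.2, Nat.lt_succ_of_le v.2.2⟩ : Fin (2 ^ 2 ^ (2 * n) * f n + 1))))
  intro u v huv
  rw [Prod.mk.injEq, Fin.mk.injEq, Fin.mk.injEq] at huv
  exact xext huv.1 huv.2

lemma xadj_vert {c h : ℕ} (hc : c < f n) (hh : h + 1 ≤ 2 ^ 2 ^ (2 * n) * f n) :
    (Xgraph f n).Adj ⟨(c, h), hc, Nat.le_of_succ_le hh⟩ ⟨(c, h + 1), hc, hh⟩ := by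
  constructor
  · intro hcon
    have := congrArg (fun z : XVert f n => z.val.2) hcon
    simp at this
  · exact Or.inl (Or.inl ⟨rfl, rfl⟩)

lemma xadj_horiz {c h : ℕ} (hc : c + 1 < f n) (hh : h ≤ 2 ^ 2 ^ (2 * n) * f n)
    (hd : 2 ^ 2 ^ (2 * n) ∣ h) :
    (Xgraph f n).Adj ⟨(c, h), Nat.lt_of_succ_lt hc, hh⟩ ⟨(c + 1, h), hc, hh⟩ := by
  constructor
  · intro hcon
    have := congrArg (fun z : XVert f n => z.val.1) hcon
    simp at this
  · exact Or.inl (Or.inr ⟨rfl, hd, rfl⟩)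

lemma xreach_down {c : ℕ} : ∀ (h : ℕ) (hc : c < f n) (hh : h ≤ 2 ^ 2 ^ (2 * n) * f n),
    (Xgraph f n).Reachable ⟨(c, h), hc, hh⟩ ⟨(c, 0), hc, Nat.zero_le _⟩ := by
  intro h
  induction h with
  | zero => intro hc hh; exact Reachable.refl _
  | succ h ih =>
    intro hc hh
    exact (Reachable.symm (SimpleGraph.Adj.reachable
      (xadj_vert hc hh))).trans (ih hc (Nat.le_of_succ_le hh))

lemma xreach_left (hf : 1 ≤ f n) : ∀ (c : ℕ) (hc : c < f n),
    (Xgraph f n).Reachable ⟨(c, 0), hc, Nat.zero_le _⟩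
      ⟨(0, 0), by omega, Nat.zero_le _⟩ := by
  intro c
  induction c with
  | zero => intro hc; exact Reachable.refl _
  | succ c ih =>
    intro hc
    exact (Reachable.symm (SimpleGraph.Adj.reachable
      (xadj_horiz hc (Nat.zero_le _) (Dvd.intro 0 rfl)))).trans (ih (by omega))

lemma xreach (hf : 1 ≤ f n) (u v : XVert f n) : (Xgraph f n).Reachable u v := by
  obtain ⟨⟨c, h⟩, hc, hh⟩ := u
  obtain ⟨⟨c', h'⟩, hc', hh'⟩ := v
  exact ((xreach_down h hc hh).trans (xreach_left hf c hc)).trans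
    (((xreach_down h' hc' hh').trans (xreach_left hf c' hc')).symm)

lemma three_k_le : ∀ k : ℕ, 3 * k ≤ 2 ^ (2 * k + 1) := by
  intro k
  induction k with
  | zero => simp
  | succ k ih =>
    have h2 : 2 ≤ 2 ^ (2 * k + 1) := by
      calc 2 = 2 ^ 1 := rfl
      _ ≤ 2 ^ (2 * k + 1) := Nat.pow_le_pow_right (by norm_num) (by omega)
    have : 2 * (k + 1) + 1 = (2 * k + 1) + 2 := by omega
    rw [this, pow_add]
    omega

lemma cube_le (k : ℕ) : k ^ 3 ≤ 2 ^ 2 ^ (2 * k + 1) := by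
  have h1 : k ^ 3 ≤ (2 ^ k) ^ 3 := Nat.pow_le_pow_left (Nat.le_of_lt ((Nat.lt_two_pow_self (n := k)))) 3
  have h2 : (2 ^ k : ℕ) ^ 3 = 2 ^ (k * 3) := (pow_mul 2 k 3).symm
  have h3 : (2:ℕ) ^ (k * 3) ≤ 2 ^ 2 ^ (2 * k + 1) := by
    apply Nat.pow_le_pow_right (by norm_num)
    have := three_k_le k
    omega
  omega

lemma slice_small {n m fn fm : ℕ} (h2 : 2 ≤ fn) (hm : 1 ≤ m) (hmn : m < n)
    (hfm : fm ≤ n - 1) (hfn1 : fn - 1 ≤ n - 1) :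
    (fn - 1) * (fm * (2 ^ 2 ^ (2 * m + 1) * fm + 1)) < fn * (2 ^ 2 ^ (2 * n) * fn + 1) := by
  set K := n - 1 with hK
  set Q := 2 ^ 2 ^ (2 * K + 1) with hQ
  have hn2 : 2 ≤ n := by omega
  have hRQ : 2 ^ 2 ^ (2 * m + 1) ≤ Q := by
    apply Nat.pow_le_pow_right (by norm_num)
    apply Nat.pow_le_pow_right (by norm_num)
    omega
  have hA : 2 ^ 2 ^ (2 * n) = Q * Q := by
    rw [hQ, ← pow_add]
    congr 1
    have h1 : 2 * n = (2 * K + 1) + 1 := by omega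
    rw [h1, pow_succ]
    omega
  have hcube : K ^ 3 ≤ Q := cube_le K
  have hsq : K ^ 2 ≤ Q := by
    rcases Nat.eq_zero_or_pos K with hK0 | hK0
    · rw [hK0]; positivity
    · calc K ^ 2 ≤ K ^ 3 := Nat.pow_le_pow_right hK0 (by norm_num)
      _ ≤ Q := hcube
  have hQ1 : 1 ≤ Q := Nat.one_le_two_pow
  have lhs_le : (fn - 1) * (fm * (2 ^ 2 ^ (2 * m + 1) * fm + 1)) ≤ K * (K * (Q * K + 1)) := by
    gcongr
  have lhs2 : K * (K * (Q * K + 1)) = Q * K ^ 3 + K ^ 2 := by ring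
  have rhs_ge : 2 * (Q * Q * 2 + 1) ≤ fn * (2 ^ 2 ^ (2 * n) * fn + 1) := by
    rw [hA]; gcongr
  have mid : Q * K ^ 3 + K ^ 2 < 2 * (Q * Q * 2 + 1) := by
    have l1 : Q * K ^ 3 ≤ Q * Q := by gcongr
    nlinarith
  omega

end XAux

set_option maxHeartbeats 2000000 in
/-- For `f n ≥ 2`, every coarse `(f n - 1)`-wiring of `X_n` into `Y`
has volume at least `2 · 2^(2^(2n+1)) + 1`. -/
theorem statement1
    (f : ℕ → ℕ)
    (hsurj : ∀ k, 1 ≤ k → ∃ n, 1 ≤ n ∧ f n = k)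
    (hf1 : f 1 = 1)
    (hf : ∀ n, 2 ≤ n → 2 ≤ f n ∧ f n ≤ n)
    (hinf : ∀ k, 2 ≤ k → {n | f n = k}.Infinite)
    (n : ℕ) (hn : 2 ≤ f n)
    (g : Wiring (Xgraph f n) (Ytotal f)) (hg : g.IsCoarse (f n - 1)) :
    2 * 2 ^ 2 ^ (2 * n + 1) + 1 ≤ g.volume := by
  classical
  set A := 2 ^ 2 ^ (2 * n) with hA
  set k := f n - 1 with hk
  have hk1 : k + 1 = f n := by omega
  haveI : Finite (XVert f n) := xvert_finite f n
  letI instX : Fintype (XVert f n) := Fintype.ofFinite _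
  letI instX' : Fintype {p : ℕ × ℕ // p.1 < f n ∧ p.2 ≤ 2 ^ 2 ^ (2 * n) * f n} := instX
  set φ := g.toFun with hφ
  set F : Set (Sym2 (YTVert f)) :=
    {e | ∃ (u v : XVert f n) (h : (Xgraph f n).Adj u v), e ∈ (g.walk u v h).edges} with hF
  set GF := SimpleGraph.fromEdgeSet F with hGF
  have hFE : F ⊆ (Ytotal f).edgeSet := by
    rintro e ⟨u, v, h, he⟩
    exact (g.walk u v h).edges_subset_edgeSet he
  have hle : GF ≤ Ytotal f := by
    intro x y hxy
    rw [hGF, SimpleGraph.fromEdgeSet_adj] at hxy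
    exact (SimpleGraph.mem_edgeSet _).mp (hFE hxy.1)
  have hGFadj_im : ∀ {x y : YTVert f}, GF.Adj x y → x ∈ g.imageVerts := by
    intro x y hxy
    rw [hGF, SimpleGraph.fromEdgeSet_adj] at hxy
    obtain ⟨u, v, h, he⟩ := hxy.1
    exact Or.inr ⟨u, v, h, (g.walk u v h).fst_mem_support_of_mem_edges he⟩
  have hwtrans : ∀ (u v : XVert f n) (h : (Xgraph f n).Adj u v),
      GF.Reachable (φ u) (φ v) := by
    intro u v h
    refine ⟨(g.walk u v h).transfer GF ?_⟩
    intro e he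
    rw [hGF, SimpleGraph.edgeSet_fromEdgeSet]
    exact ⟨⟨u, v, h, he⟩,
      SimpleGraph.not_isDiag_of_mem_edgeSet _ ((g.walk u v h).edges_subset_edgeSet he)⟩
  have hfn1 : 1 ≤ f n := by omega
  have hφreach : ∀ u v : XVert f n, GF.Reachable (φ u) (φ v) := by
    intro u v
    obtain ⟨p⟩ := xreach hfn1 u v
    induction p with
    | nil => exact Reachable.refl _
    | cons h q ih => exact (hwtrans _ _ h).trans ih
  set x₀ : XVert f n := ⟨(0, 0), by omega, Nat.zero_le _⟩ with hx₀
  set m₀ := (φ x₀).val.1 with hm₀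
  have hm1 : 1 ≤ m₀ := (φ x₀).2.1
  have hcoordφ : ∀ v : XVert f n, (φ v).val.1 = m₀ := by
    intro v
    obtain ⟨p⟩ := hφreach v x₀
    exact (walk_coord_const hle p _ p.end_mem_support).symm
  have hcoord : ∀ z ∈ g.imageVerts, z.val.1 = m₀ := by
    intro z hz
    rcases hz with ⟨v, rfl⟩ | ⟨u, v, h, hz⟩
    · exact hcoordφ v
    · rw [walk_coord_const (le_refl (Ytotal f)) (g.walk u v h) z hz]
      exact hcoordφ u
  have himfin : g.imageVerts.Finite := by
    apply Set.Finite.union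
    · exact Set.finite_range φ
    · have hsub : {w : YTVert f | ∃ (u v : XVert f n) (h : (Xgraph f n).Adj u v), w ∈ (g.walk u v h).support}
          ⊆ ⋃ (p : XVert f n × XVert f n),
            {w | ∃ h : (Xgraph f n).Adj p.1 p.2, w ∈ (g.walk p.1 p.2 h).support} := by
        rintro w ⟨u, v, h, hw⟩
        exact Set.mem_iUnion.mpr ⟨(u, v), h, hw⟩
      apply Set.Finite.subset _ hsub
      apply Set.finite_iUnion
      intro p
      by_cases hadj : (Xgraph f n).Adj p.1 p.2
      · apply Set.Finite.subset ((g.walk p.1 p.2 hadj).support.finite_toSet)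
        rintro w ⟨h', hw⟩
        rwa [Subsingleton.elim h' hadj] at hw
      · apply Set.Finite.subset Set.finite_empty
        rintro w ⟨h', _⟩
        exact absurd h' hadj
  have hfiber : ∀ w, (Finset.univ.filter (fun v => φ v = w)).card ≤ k := by
    intro w
    have h1 := hg.1 w
    have h2 : {v : XVert f n | φ v = w} = ↑(Finset.univ.filter (fun v => φ v = w)) := by
      ext v; simp
    rwa [h2, Set.ncard_coe_finset] at h1
  have himg_le : (Finset.univ.image φ).card ≤ g.volume := by
    have hsub : ↑(Finset.univ.image φ) ⊆ g.imageVerts := by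
      intro z hz
      simp only [Finset.coe_image, Finset.coe_univ, Set.image_univ] at hz
      exact Or.inl hz
    have h1 := Set.ncard_le_ncard hsub himfin
    rwa [Set.ncard_coe_finset] at h1
  have hXle : Fintype.card (XVert f n) ≤ k * g.volume := by
    calc Fintype.card (XVert f n) = Finset.univ.card := rfl
    _ ≤ k * (Finset.univ.image φ).card :=
        Finset.card_le_mul_card_image _ k (fun b _ => hfiber b)
    _ ≤ k * g.volume := Nat.mul_le_mul_left _ himg_le
  have hXge : f n * (A * f n + 1) ≤ Fintype.card (XVert f n) := by
    have hinj : Function.Injective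
        (fun p : Fin (f n) × Fin (A * f n + 1) =>
          (⟨(p.1.val, p.2.val), p.1.2, Nat.lt_succ_iff.mp p.2.2⟩ : XVert f n)) := by
      intro p q hpq
      have h1 := congrArg (fun z : XVert f n => z.val.1) hpq
      have h2 := congrArg (fun z : XVert f n => z.val.2) hpq
      simp only at h1 h2
      exact Prod.ext (Fin.ext h1) (Fin.ext h2)
    have hcle : Fintype.card (Fin (f n) × Fin (A * f n + 1)) ≤ Fintype.card (XVert f n) :=
      Fintype.card_le_of_injective _ hinj
    simpa using hcle
  have hm₀n : n ≤ m₀ := by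
    by_contra hmn
    push_neg at hmn
    have hn2 : 2 ≤ n := by omega
    have hslice : g.volume ≤ f m₀ * (2 ^ 2 ^ (2 * m₀ + 1) * f m₀ + 1) := by
      have hinj : Function.Injective (fun z : ↥(g.imageVerts) =>
          ((⟨z.1.val.2.1, by
              have hb := z.1.2.2.1
              rwa [hcoord z.1 z.2] at hb⟩ : Fin (f m₀)),
           (⟨z.1.val.2.2, by
              have hb := z.1.2.2.2
              rw [hcoord z.1 z.2] at hb
              exact Nat.lt_succ_of_le hb⟩ : Fin (2 ^ 2 ^ (2 * m₀ + 1) * f m₀ + 1)))) := by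
        intro z z' hzz
        rw [Prod.mk.injEq, Fin.mk.injEq, Fin.mk.injEq] at hzz
        exact Subtype.ext (yext ((hcoord z.1 z.2).trans (hcoord z'.1 z'.2).symm) hzz.1 hzz.2)
      have h1 : g.volume = Nat.card ↥(g.imageVerts) := (Nat.card_coe_set_eq _).symm
      have h2 := Nat.card_le_card_of_injective _ hinj
      rw [h1]
      calc Nat.card ↥(g.imageVerts)
          ≤ Nat.card (Fin (f m₀) × Fin (2 ^ 2 ^ (2 * m₀ + 1) * f m₀ + 1)) := h2
      _ = f m₀ * (2 ^ 2 ^ (2 * m₀ + 1) * f m₀ + 1) := by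
          simp [Nat.card_eq_fintype_card]
    have hfm : f m₀ ≤ n - 1 := by
      rcases Nat.lt_or_ge m₀ 2 with h1 | h1
      · have : m₀ = 1 := by omega
        rw [this, hf1]; omega
      · have := (hf m₀ h1).2; omega
    have hfn1' : f n - 1 ≤ n - 1 := by
      have := (hf n hn2).2; omega
    have hss := slice_small (n := n) (m := m₀) (fn := f n) (fm := f m₀) hn hm1 hmn hfm hfn1'
    have hchain : f n * (A * f n + 1) ≤ k * (f m₀ * (2 ^ 2 ^ (2 * m₀ + 1) * f m₀ + 1)) :=
      le_trans (le_trans hXge hXle) (Nat.mul_le_mul_left _ hslice)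
    rw [hk] at hchain
    rw [hA] at hchain
    omega
  by_cases hcyc : ∃ (z : YTVert f) (c : GF.Walk z z), c.IsCycle
  · obtain ⟨z, c, hc⟩ := hcyc
    have hzim : ∀ x ∈ c.support, x ∈ g.imageVerts := by
      intro x hx
      obtain ⟨u1, u2, hne, ha1, ha2, he1, he2⟩ := cycle_two_edges c hc hx
      exact hGFadj_im ha1
    have hzc : z.val.1 = m₀ := hcoord z (hzim z c.start_mem_support)
    have hlen := cycle_length_ge hle c hc
    rw [hzc] at hlen
    have hBn : (2:ℕ) ^ 2 ^ (2 * n + 1) ≤ 2 ^ 2 ^ (2 * m₀ + 1) := by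
      apply Nat.pow_le_pow_right (by norm_num)
      apply Nat.pow_le_pow_right (by norm_num)
      omega
    have hcard : c.length ≤ g.volume := by
      have hnd : c.support.tail.Nodup := hc.support_nodup
      have hsub : ↑c.support.tail.toFinset ⊆ g.imageVerts := by
        intro x hx
        rw [Finset.mem_coe, List.mem_toFinset] at hx
        exact hzim x (List.mem_of_mem_tail hx)
      have h1 := Set.ncard_le_ncard hsub himfin
      rw [Set.ncard_coe_finset] at h1
      have h2 : c.support.tail.toFinset.card = c.support.tail.length :=
        List.toFinset_card_of_nodup hnd
      have h3 : c.support.length = c.length + 1 := c.length_support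
      have h4 : c.support.tail.length = c.support.length - 1 := by
        simp [List.length_tail]
      have hvol : g.volume = g.imageVerts.ncard := rfl
      omega
    omega
  · -- forest case: derive a contradiction
    exfalso
    have hacyc : GF.IsAcyclic := by
      intro v c hc
      exact hcyc ⟨v, c, hc⟩
    have hbridge : ∀ ⦃a b : YTVert f⦄, GF.Adj a b → GF.IsBridge s(a, b) :=
      SimpleGraph.isAcyclic_iff_forall_adj_isBridge.mp hacyc
    have hApos : 0 < A := by positivity
    -- rung vertices
    set Rset : Finset (XVert f n) := Finset.univ.filter (fun v => A ∣ v.val.2) with hRset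
    have hRcard : f n * (f n + 1) ≤ Rset.card := by
      have hmaps : ∀ p : Fin (f n) × Fin (f n + 1),
          (⟨(p.1.val, p.2.val * A), p.1.2, by
            have h1 : p.2.val ≤ f n := Nat.lt_succ_iff.mp p.2.2
            calc p.2.val * A ≤ f n * A := Nat.mul_le_mul_right _ h1
            _ = A * f n := Nat.mul_comm _ _⟩ : XVert f n) ∈ Rset := by
        intro p
        rw [hRset]
        exact Finset.mem_filter.mpr ⟨Finset.mem_univ _, ⟨p.2.val, Nat.mul_comm _ _⟩⟩
      have hcle := Finset.card_le_card_of_injOn (s := Finset.univ)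
        (fun p : Fin (f n) × Fin (f n + 1) =>
          (⟨(p.1.val, p.2.val * A), p.1.2, by
            have h1 : p.2.val ≤ f n := Nat.lt_succ_iff.mp p.2.2
            calc p.2.val * A ≤ f n * A := Nat.mul_le_mul_right _ h1
            _ = A * f n := Nat.mul_comm _ _⟩ : XVert f n))
        (fun p _ => hmaps p) ?_
      · calc f n * (f n + 1) = Finset.univ.card := by simp
        _ ≤ Rset.card := hcle
      · intro p _ q _ hpq
        have h1 := congrArg (fun z : XVert f n => z.val.1) hpq
        have h2 := congrArg (fun z : XVert f n => z.val.2) hpq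
        simp only at h1 h2
        have h3 : p.2.val = q.2.val := Nat.eq_of_mul_eq_mul_right hApos h2
        exact Prod.ext (Fin.ext h1) (Fin.ext h3)
    -- all image vertices reachable from the basepoint lie in the image
    have himend : ∀ {a b : YTVert f}, GF.Walk a b → a ∈ g.imageVerts → b ∈ g.imageVerts := by
      intro a b p
      induction p with
      | nil => exact id
      | cons h q ih => exact fun _ => ih (hGFadj_im h.symm)
    set Tset : Set (YTVert f) := {z | GF.Reachable (φ x₀) z} with hTset
    have hTsub : Tset ⊆ g.imageVerts := by
      intro z hz
      obtain ⟨p⟩ := hz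
      exact himend p (Or.inl ⟨x₀, rfl⟩)
    have hTfin : Tset.Finite := himfin.subset hTsub
    set μ : YTVert f → ℕ := fun zz => ∑ v ∈ Rset, GF.dist (φ v) zz with hμ
    have hTne : (hTfin.toFinset).Nonempty :=
      ⟨φ x₀, by rw [Set.Finite.mem_toFinset]; exact Reachable.refl _⟩
    obtain ⟨w, hwT', hwmin⟩ := Finset.exists_min_image hTfin.toFinset μ hTne
    have hwT : GF.Reachable (φ x₀) w := by
      rwa [Set.Finite.mem_toFinset] at hwT'
    -- sides of a deleted edge
    have hΦside : ∀ (a b : YTVert f), GF.Adj a b → GF.Reachable (φ x₀) a → ∀ v : XVert f n,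
        (GF \ fromEdgeSet {s(a,b)}).Reachable a (φ v) ∨
        (GF \ fromEdgeSet {s(a,b)}).Reachable b (φ v) := by
      intro a b hab hra v
      exact reach_split (φ v) (hra.symm.trans (hφreach x₀ v))
    have hdisjE : ∀ (a b : YTVert f), GF.Adj a b → ∀ z : YTVert f,
        ¬((GF \ fromEdgeSet {s(a,b)}).Reachable a z ∧
          (GF \ fromEdgeSet {s(a,b)}).Reachable b z) := by
      rintro a b hab z ⟨h1, h2⟩
      exact (SimpleGraph.isBridge_iff.mp (hbridge hab)) (h1.trans h2.symm)
    have hcross : ∀ (a b : YTVert f), GF.Adj a b →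
        ∀ (u v : XVert f n) (h : (Xgraph f n).Adj u v),
        (GF \ fromEdgeSet {s(a,b)}).Reachable a (φ u) →
        (GF \ fromEdgeSet {s(a,b)}).Reachable b (φ v) →
        s(a,b) ∈ (g.walk u v h).edges := by
      intro a b hab u v h h1 h2
      by_contra hnot
      have hreach' : (GF \ fromEdgeSet {s(a,b)}).Reachable (φ u) (φ v) := by
        refine ⟨(g.walk u v h).transfer _ ?_⟩
        intro e he
        rw [SimpleGraph.edgeSet_sdiff, Set.mem_diff]
        constructor
        · rw [hGF, SimpleGraph.edgeSet_fromEdgeSet]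
          exact ⟨⟨u, v, h, he⟩,
            SimpleGraph.not_isDiag_of_mem_edgeSet _ ((g.walk u v h).edges_subset_edgeSet he)⟩
        · rw [SimpleGraph.edgeSet_fromEdgeSet]
          rintro ⟨he', -⟩
          rw [Set.mem_singleton_iff] at he'
          exact hnot (he' ▸ he)
      exact hdisjE a b hab (φ v) ⟨h1.trans hreach', h2⟩
    -- distance across a bridge
    have hdistlem : ∀ (a b : YTVert f), GF.Adj a b → ∀ z : YTVert f,
        (GF \ fromEdgeSet {s(a,b)}).Reachable a z → GF.dist z b = GF.dist z a + 1 := by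
      intro a b hab z hz
      have hza : GF.Reachable z a := (hz.mono sdiff_le).symm
      have hzb : GF.Reachable z b := hza.trans hab.reachable
      obtain ⟨p, hp⟩ := hza.exists_walk_length_eq_dist
      have hle1 : GF.dist z b ≤ GF.dist z a + 1 := by
        have h1 := SimpleGraph.dist_le (p.append hab.toWalk)
        rw [SimpleGraph.Walk.length_append] at h1
        simpa [hp] using h1
      obtain ⟨q, hq⟩ := hzb.exists_walk_length_eq_dist
      have hmem : s(a,b) ∈ q.edges := by
        by_contra hnot
        have hq' : (GF \ fromEdgeSet {s(a,b)}).Reachable z b := by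
          refine ⟨q.transfer _ ?_⟩
          intro e he
          rw [SimpleGraph.edgeSet_sdiff, Set.mem_diff]
          refine ⟨q.edges_subset_edgeSet he, ?_⟩
          rw [SimpleGraph.edgeSet_fromEdgeSet]
          rintro ⟨he', -⟩
          rw [Set.mem_singleton_iff] at he'
          exact hnot (he' ▸ he)
        exact (SimpleGraph.isBridge_iff.mp (hbridge hab)) (hz.trans hq')
      have haq : a ∈ q.support := q.fst_mem_support_of_mem_edges hmem
      have hsp := q.take_spec haq
      have hlen2 : (q.dropUntil a haq).length ≠ 0 := by
        intro h0
        exact hab.ne (SimpleGraph.Walk.eq_of_length_eq_zero h0)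
      have hd1 : GF.dist z a ≤ (q.takeUntil a haq).length := SimpleGraph.dist_le _
      have hlsum : (q.takeUntil a haq).length + (q.dropUntil a haq).length = q.length := by
        have := congrArg SimpleGraph.Walk.length hsp
        rwa [SimpleGraph.Walk.length_append] at this
      omega
    -- the main cut bound
    have cutbound : ∀ (a b : YTVert f), GF.Adj a b → GF.Reachable (φ x₀) a →
        4 * (Rset.filter (fun v => (GF \ fromEdgeSet {s(a,b)}).Reachable b (φ v))).card ≤ k * k ∨
        4 * (Rset.filter (fun v => (GF \ fromEdgeSet {s(a,b)}).Reachable a (φ v))).card ≤ k * k := by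
      intro a b hab hra
      set Gd := GF \ fromEdgeSet {s(a,b)} with hGd
      have hsplit2 : ∀ v : XVert f n, Gd.Reachable a (φ v) ∨ Gd.Reachable b (φ v) :=
        hΦside a b hab hra
      have hdisj2 : ∀ v : XVert f n, ¬(Gd.Reachable a (φ v) ∧ Gd.Reachable b (φ v)) :=
        fun v hv => hdisjE a b hab (φ v) hv
      set PA : XVert f n → Prop := fun v => Gd.Reachable a (φ v) with hPA
      set PB : XVert f n → Prop := fun v => Gd.Reachable b (φ v) with hPB
      set mc : Finset ℕ := (Finset.range (f n)).filter
        (fun i => ∃ v v' : XVert f n, v.val.1 = i ∧ v'.val.1 = i ∧ PA v ∧ PB v') with hmc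
      set mr : Finset ℕ := (Finset.range (f n + 1)).filter
        (fun l => ∃ v v' : XVert f n, v.val.2 = l * A ∧ v'.val.2 = l * A ∧ PA v ∧ PB v') with hmr
      set CrossA : Finset (XVert f n × XVert f n) := Finset.univ.filter
        (fun p => (Xgraph f n).Adj p.1 p.2 ∧ PA p.1 ∧ PB p.2) with hCr
      have hcolpair : ∀ i ∈ mc, ∃ p : XVert f n × XVert f n,
          p ∈ CrossA ∧ p.1.val.1 = i ∧ p.2.val.1 = i := by
        intro i hi
        rw [hmc, Finset.mem_filter, Finset.mem_range] at hi
        obtain ⟨hir, v, v', hv, hv', hPAv, hPBv'⟩ := hi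
        rcases Nat.le_total v.val.2 v'.val.2 with hle2 | hle2
        · obtain ⟨j, hj1, hj2, hj3, hj4⟩ := flip_exists
            (fun j => ∃ u : XVert f n, u.val = (i, j) ∧ PA u) (v'.val.2 - v.val.2) v.val.2
            ⟨v, Prod.ext hv rfl, hPAv⟩
            (by
              rw [show v.val.2 + (v'.val.2 - v.val.2) = v'.val.2 by omega]
              rintro ⟨u, hu, hPAu⟩
              have huv : u = v' := xext (by rw [hu, hv']) (by rw [hu])
              exact hdisj2 v' ⟨huv ▸ hPAu, hPBv'⟩)
          obtain ⟨u, hu, hPAu⟩ := hj3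
          have hjb : j + 1 ≤ A * f n := le_trans (by omega) v'.2.2
          have hPBu' : PB (⟨(i, j + 1), hir, hjb⟩ : XVert f n) := by
            rcases hsplit2 ⟨(i, j + 1), hir, hjb⟩ with hA' | hB'
            · exact absurd ⟨⟨(i, j + 1), hir, hjb⟩, rfl, hA'⟩ hj4
            · exact hB'
          have hueq : u = (⟨(i, j), hir, Nat.le_of_succ_le hjb⟩ : XVert f n) := Subtype.ext hu
          have hadj : (Xgraph f n).Adj u ⟨(i, j + 1), hir, hjb⟩ := by
            rw [hueq]; exact xadj_vert hir hjb
          refine ⟨(u, ⟨(i, j + 1), hir, hjb⟩), ?_, by rw [hu], rfl⟩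
          rw [hCr, Finset.mem_filter]
          exact ⟨Finset.mem_univ _, hadj, hPAu, hPBu'⟩
        · obtain ⟨j, hj1, hj2, hj3, hj4⟩ := flip_exists
            (fun j => ∃ u : XVert f n, u.val = (i, j) ∧ PB u) (v.val.2 - v'.val.2) v'.val.2
            ⟨v', Prod.ext hv' rfl, hPBv'⟩
            (by
              rw [show v'.val.2 + (v.val.2 - v'.val.2) = v.val.2 by omega]
              rintro ⟨u, hu, hPBu⟩
              have huv : u = v := xext (by rw [hu, hv]) (by rw [hu])
              exact hdisj2 v ⟨hPAv, huv ▸ hPBu⟩)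
          obtain ⟨u, hu, hPBu⟩ := hj3
          have hjb : j + 1 ≤ A * f n := le_trans (by omega) v.2.2
          have hPAu' : PA (⟨(i, j + 1), hir, hjb⟩ : XVert f n) := by
            rcases hsplit2 ⟨(i, j + 1), hir, hjb⟩ with hA' | hB'
            · exact hA'
            · exact absurd ⟨⟨(i, j + 1), hir, hjb⟩, rfl, hB'⟩ hj4
          have hueq : u = (⟨(i, j), hir, Nat.le_of_succ_le hjb⟩ : XVert f n) := Subtype.ext hu
          have hadj : (Xgraph f n).Adj (⟨(i, j + 1), hir, hjb⟩ : XVert f n) u := by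
            rw [hueq]; exact (xadj_vert hir hjb).symm
          refine ⟨(⟨(i, j + 1), hir, hjb⟩, u), ?_, rfl, by rw [hu]⟩
          rw [hCr, Finset.mem_filter]
          exact ⟨Finset.mem_univ _, hadj, hPAu', hPBu⟩
      have hrowpair : ∀ l ∈ mr, ∃ p : XVert f n × XVert f n,
          p ∈ CrossA ∧ p.1.val.2 = l * A ∧ p.2.val.2 = l * A ∧ p.1.val.1 ≠ p.2.val.1 := by
        intro l hl
        rw [hmr, Finset.mem_filter, Finset.mem_range] at hl
        obtain ⟨hlr, v, v', hv, hv', hPAv, hPBv'⟩ := hl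
        have hlA : l * A ≤ A * f n := by
          rw [Nat.mul_comm]
          exact Nat.mul_le_mul_left _ (by omega)
        have hdvd : 2 ^ 2 ^ (2 * n) ∣ l * A := by rw [hA]; exact ⟨l, Nat.mul_comm l A⟩
        rcases Nat.le_total v.val.1 v'.val.1 with hle2 | hle2
        · obtain ⟨j, hj1, hj2, hj3, hj4⟩ := flip_exists
            (fun c => ∃ u : XVert f n, u.val = (c, l * A) ∧ PA u) (v'.val.1 - v.val.1) v.val.1
            ⟨v, Prod.ext rfl hv, hPAv⟩
            (by
              rw [show v.val.1 + (v'.val.1 - v.val.1) = v'.val.1 by omega]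
              rintro ⟨u, hu, hPAu⟩
              have huv : u = v' := xext (by rw [hu]) (by rw [hu, hv'])
              exact hdisj2 v' ⟨huv ▸ hPAu, hPBv'⟩)
          obtain ⟨u, hu, hPAu⟩ := hj3
          have hjb : j + 1 < f n := lt_of_le_of_lt (by omega) v'.2.1
          have hPBu' : PB (⟨(j + 1, l * A), hjb, hlA⟩ : XVert f n) := by
            rcases hsplit2 ⟨(j + 1, l * A), hjb, hlA⟩ with hA' | hB'
            · exact absurd ⟨⟨(j + 1, l * A), hjb, hlA⟩, rfl, hA'⟩ hj4
            · exact hB'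
          have hueq : u = (⟨(j, l * A), Nat.lt_of_succ_lt hjb, hlA⟩ : XVert f n) := Subtype.ext hu
          have hadj : (Xgraph f n).Adj u ⟨(j + 1, l * A), hjb, hlA⟩ := by
            rw [hueq]; exact xadj_horiz hjb hlA hdvd
          refine ⟨(u, ⟨(j + 1, l * A), hjb, hlA⟩), ?_, by rw [hu], rfl, by rw [hu]; simp⟩
          rw [hCr, Finset.mem_filter]
          exact ⟨Finset.mem_univ _, hadj, hPAu, hPBu'⟩
        · obtain ⟨j, hj1, hj2, hj3, hj4⟩ := flip_exists
            (fun c => ∃ u : XVert f n, u.val = (c, l * A) ∧ PB u) (v.val.1 - v'.val.1) v'.val.1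
            ⟨v', Prod.ext rfl hv', hPBv'⟩
            (by
              rw [show v'.val.1 + (v.val.1 - v'.val.1) = v.val.1 by omega]
              rintro ⟨u, hu, hPBu⟩
              have huv : u = v := xext (by rw [hu]) (by rw [hu, hv])
              exact hdisj2 v ⟨hPAv, huv ▸ hPBu⟩)
          obtain ⟨u, hu, hPBu⟩ := hj3
          have hjb : j + 1 < f n := lt_of_le_of_lt (by omega) v.2.1
          have hPAu' : PA (⟨(j + 1, l * A), hjb, hlA⟩ : XVert f n) := by
            rcases hsplit2 ⟨(j + 1, l * A), hjb, hlA⟩ with hA' | hB'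
            · exact hA'
            · exact absurd ⟨⟨(j + 1, l * A), hjb, hlA⟩, rfl, hB'⟩ hj4
          have hueq : u = (⟨(j, l * A), Nat.lt_of_succ_lt hjb, hlA⟩ : XVert f n) := Subtype.ext hu
          have hadj : (Xgraph f n).Adj (⟨(j + 1, l * A), hjb, hlA⟩ : XVert f n) u := by
            rw [hueq]; exact (xadj_horiz hjb hlA hdvd).symm
          refine ⟨(⟨(j + 1, l * A), hjb, hlA⟩, u), ?_, rfl, by rw [hu], by rw [hu]; simp⟩
          rw [hCr, Finset.mem_filter]
          exact ⟨Finset.mem_univ _, hadj, hPAu', hPBu⟩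
      -- mc.card + mr.card ≤ CrossA.card
      have hmcCV : mc.card ≤ (CrossA.filter (fun p => p.1.val.1 = p.2.val.1)).card := by
        apply Finset.card_le_card_of_injOn
          (fun i => if h : i ∈ mc then (hcolpair i h).choose else (x₀, x₀))
        · intro i hi
          rw [Finset.mem_coe] at hi
          simp only [dif_pos hi]
          obtain ⟨h1, h2, h3⟩ := (hcolpair i hi).choose_spec
          rw [Finset.mem_coe, Finset.mem_filter]
          exact ⟨h1, h2.trans h3.symm⟩
        · intro i hi i' hi' heq
          rw [Finset.mem_coe] at hi hi'
          simp only [dif_pos hi, dif_pos hi'] at heq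
          obtain ⟨-, h2, -⟩ := (hcolpair i hi).choose_spec
          obtain ⟨-, h2', -⟩ := (hcolpair i' hi').choose_spec
          rw [← h2, ← h2', heq]
      have hmrCH : mr.card ≤ (CrossA.filter (fun p => ¬ p.1.val.1 = p.2.val.1)).card := by
        apply Finset.card_le_card_of_injOn
          (fun l => if h : l ∈ mr then (hrowpair l h).choose else (x₀, x₀))
        · intro l hl
          rw [Finset.mem_coe] at hl
          simp only [dif_pos hl]
          obtain ⟨h1, h2, h3, h4⟩ := (hrowpair l hl).choose_spec
          rw [Finset.mem_coe, Finset.mem_filter]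
          exact ⟨h1, h4⟩
        · intro l hl l' hl' heq
          rw [Finset.mem_coe] at hl hl'
          simp only [dif_pos hl, dif_pos hl'] at heq
          obtain ⟨-, h2, -, -⟩ := (hrowpair l hl).choose_spec
          obtain ⟨-, h2', -, -⟩ := (hrowpair l' hl').choose_spec
          have : l * A = l' * A := by rw [← h2, ← h2', heq]
          exact Nat.eq_of_mul_eq_mul_right hApos this
      have hmcmr : mc.card + mr.card ≤ CrossA.card := by
        have hspl := Finset.card_filter_add_card_filter_not
          (s := CrossA) (p := fun p => p.1.val.1 = p.2.val.1)
        omega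
      -- congestion bound : CrossA.card ≤ k
      have hCS := hg.2 s(a,b) (hle hab)
      set CSF : Finset (XVert f n × XVert f n) := Finset.univ.filter
        (fun p => ∃ h : (Xgraph f n).Adj p.1 p.2, s(a,b) ∈ (g.walk p.1 p.2 h).edges) with hCSF
      have hCSc : CSF.card ≤ 2 * k := by
        have h2 : {p : XVert f n × XVert f n | ∃ h : (Xgraph f n).Adj p.1 p.2,
            s(a,b) ∈ (g.walk p.1 p.2 h).edges} = ↑CSF := by
          ext p
          rw [hCSF]
          simp
        rwa [h2, Set.ncard_coe_finset] at hCS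
      have hsubCr : CrossA ⊆ CSF := by
        intro p hp
        rw [hCr, Finset.mem_filter] at hp
        obtain ⟨-, hadj, hA', hB'⟩ := hp
        rw [hCSF, Finset.mem_filter]
        exact ⟨Finset.mem_univ _, hadj, hcross a b hab p.1 p.2 hadj hA' hB'⟩
      have hsubCr' : CrossA.image Prod.swap ⊆ CSF := by
        intro p hp
        rw [Finset.mem_image] at hp
        obtain ⟨⟨q1, q2⟩, hq, rfl⟩ := hp
        rw [hCr, Finset.mem_filter] at hq
        obtain ⟨-, hadj, hA', hB'⟩ := hq
        rw [hCSF, Finset.mem_filter]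
        simp only [Prod.swap_prod_mk]
        refine ⟨Finset.mem_univ _, (Xgraph f n).adj_symm hadj, ?_⟩
        rw [g.walk_symm q1 q2 hadj, SimpleGraph.Walk.edges_reverse, List.mem_reverse]
        exact hcross a b hab q1 q2 hadj hA' hB'
      have hdisjCr : Disjoint CrossA (CrossA.image Prod.swap) := by
        rw [Finset.disjoint_left]
        intro p hp hp'
        rw [hCr, Finset.mem_filter] at hp
        rw [Finset.mem_image] at hp'
        obtain ⟨q, hq, hqe⟩ := hp'
        rw [hCr, Finset.mem_filter] at hq
        have h1 : p.1 = q.2 := by rw [← hqe]; rfl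
        exact hdisj2 p.1 ⟨hp.2.2.1, h1 ▸ hq.2.2.2⟩
      have hCrk : CrossA.card ≤ k := by
        have hcu : (CrossA ∪ CrossA.image Prod.swap).card ≤ CSF.card :=
          Finset.card_le_card (Finset.union_subset hsubCr hsubCr')
        rw [Finset.card_union_of_disjoint hdisjCr,
          Finset.card_image_of_injective _ Prod.swap_injective] at hcu
        omega
      have hmcmrk : mc.card + mr.card ≤ k := le_trans hmcmr hCrk
      -- purity of unmixed columns and rows
      have hpurecol : ∀ i, i < f n → i ∉ mc →
          (∀ v : XVert f n, v.val.1 = i → PA v) ∨ (∀ v : XVert f n, v.val.1 = i → PB v) := by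
        intro i hi hnm
        by_cases hBex : ∃ v : XVert f n, v.val.1 = i ∧ PB v
        · right
          intro v hv
          rcases hsplit2 v with hA' | hB'
          · exfalso
            obtain ⟨v', hv', hB'⟩ := hBex
            exact hnm (by
              rw [hmc, Finset.mem_filter, Finset.mem_range]
              exact ⟨hi, v, v', hv, hv', hA', hB'⟩)
          · exact hB'
        · left
          intro v hv
          rcases hsplit2 v with hA' | hB'
          · exact hA'
          · exact absurd ⟨v, hv, hB'⟩ hBex
      have hpurerow : ∀ l, l ≤ f n → l ∉ mr →
          (∀ v : XVert f n, v.val.2 = l * A → PA v) ∨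
          (∀ v : XVert f n, v.val.2 = l * A → PB v) := by
        intro l hl hnm
        by_cases hBex : ∃ v : XVert f n, v.val.2 = l * A ∧ PB v
        · right
          intro v hv
          rcases hsplit2 v with hA' | hB'
          · exfalso
            obtain ⟨v', hv', hB'⟩ := hBex
            exact hnm (by
              rw [hmr, Finset.mem_filter, Finset.mem_range]
              exact ⟨by omega, v, v', hv, hv', hA', hB'⟩)
          · exact hB'
        · left
          intro v hv
          rcases hsplit2 v with hA' | hB'
          · exact hA'
          · exact absurd ⟨v, hv, hB'⟩ hBex
      -- existence of a pure column and a pure row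
      have hex_i : ∃ i, i < f n ∧ i ∉ mc := by
        by_contra hcon
        push_neg at hcon
        have : Finset.range (f n) ⊆ mc := fun i hi =>
          hcon i (Finset.mem_range.mp hi)
        have := Finset.card_le_card this
        rw [Finset.card_range] at this
        omega
      have hex_l : ∃ l, l ≤ f n ∧ l ∉ mr := by
        by_contra hcon
        push_neg at hcon
        have hsub2 : Finset.range (f n + 1) ⊆ mr := fun l hl =>
          hcon l (Nat.lt_succ_iff.mp (Finset.mem_range.mp hl))
        have := Finset.card_le_card hsub2
        rw [Finset.card_range] at this
        omega
      obtain ⟨i₀, hi₀r, hi₀⟩ := hex_i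
      obtain ⟨l₀, hl₀r, hl₀⟩ := hex_l
      have hl₀A : l₀ * A ≤ A * f n := by
        rw [Nat.mul_comm]; exact Nat.mul_le_mul_left _ hl₀r
      have hsq : 4 * (mc.card * mr.card) ≤ k * k := by
        have t1 : 2 * mc.card * mr.card ≤ mc.card ^ 2 + mr.card ^ 2 := two_mul_le_add_sq _ _
        have t2 : (mc.card + mr.card) * (mc.card + mr.card) ≤ k * k :=
          Nat.mul_le_mul hmcmrk hmcmrk
        nlinarith [t1, t2]
      rcases hpurecol i₀ hi₀r hi₀ with hcolA | hcolB
      · left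
        have hrowA : ∀ l, l ≤ f n → l ∉ mr → ∀ v : XVert f n, v.val.2 = l * A → PA v := by
          intro l hl hnm v hv
          rcases hpurerow l hl hnm with h | h
          · exact h v hv
          · exfalso
            have hlA' : l * A ≤ A * f n := by
              rw [Nat.mul_comm]; exact Nat.mul_le_mul_left _ hl
            exact hdisj2 _ ⟨hcolA ⟨(i₀, l * A), hi₀r, hlA'⟩ rfl, h ⟨(i₀, l * A), hi₀r, hlA'⟩ rfl⟩
        have hcolA' : ∀ i, i < f n → i ∉ mc → ∀ v : XVert f n, v.val.1 = i → PA v := by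
          intro i hi hnm v hv
          rcases hpurecol i hi hnm with h | h
          · exact h v hv
          · exfalso
            exact hdisj2 _ ⟨hrowA l₀ hl₀r hl₀ ⟨(i, l₀ * A), hi, hl₀A⟩ rfl, h ⟨(i, l₀ * A), hi, hl₀A⟩ rfl⟩
        have hcnt : (Rset.filter (fun v => PB v)).card ≤ mc.card * mr.card := by
          rw [← Finset.card_product]
          apply Finset.card_le_card_of_injOn (fun v : XVert f n => (v.val.1, v.val.2 / A))
          · intro v hvm
            rw [Finset.mem_coe, Finset.mem_filter] at hvm
            obtain ⟨hvR, hvB⟩ := hvm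
            rw [hRset, Finset.mem_filter] at hvR
            obtain ⟨-, hdvd⟩ := hvR
            obtain ⟨l, hl⟩ := hdvd
            have hq1 : v.val.2 / A = l := by rw [hl, Nat.mul_div_cancel_left _ hApos]
            have hlle : l ≤ f n := by
              have h2 := v.2.2; rw [hl] at h2
              exact Nat.le_of_mul_le_mul_left h2 hApos
            rw [Finset.mem_coe, Finset.mem_product]
            constructor
            · by_contra hnm
              exact hdisj2 v ⟨hcolA' v.val.1 v.2.1 hnm v rfl, hvB⟩
            · show v.val.2 / A ∈ mr
              rw [hq1]
              by_contra hnm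
              exact hdisj2 v ⟨hrowA l hlle hnm v (by rw [hl, Nat.mul_comm]), hvB⟩
          · intro v hv v' hv' heq
            rw [Finset.mem_coe, Finset.mem_filter, hRset, Finset.mem_filter] at hv hv'
            have hd1 := hv.1.2
            have hd2 := hv'.1.2
            rw [Prod.mk.injEq] at heq
            refine xext heq.1 ?_
            have e1 : v.val.2 / A * A = v.val.2 := Nat.div_mul_cancel hd1
            have e2 : v'.val.2 / A * A = v'.val.2 := Nat.div_mul_cancel hd2
            rw [← e1, ← e2, heq.2]
        show 4 * (Rset.filter (fun v => PB v)).card ≤ k * k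
        omega
      · right
        have hrowB : ∀ l, l ≤ f n → l ∉ mr → ∀ v : XVert f n, v.val.2 = l * A → PB v := by
          intro l hl hnm v hv
          rcases hpurerow l hl hnm with h | h
          · exfalso
            have hlA' : l * A ≤ A * f n := by
              rw [Nat.mul_comm]; exact Nat.mul_le_mul_left _ hl
            exact hdisj2 _ ⟨h ⟨(i₀, l * A), hi₀r, hlA'⟩ rfl, hcolB ⟨(i₀, l * A), hi₀r, hlA'⟩ rfl⟩
          · exact h v hv
        have hcolB' : ∀ i, i < f n → i ∉ mc → ∀ v : XVert f n, v.val.1 = i → PB v := by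
          intro i hi hnm v hv
          rcases hpurecol i hi hnm with h | h
          · exfalso
            exact hdisj2 _ ⟨h ⟨(i, l₀ * A), hi, hl₀A⟩ rfl, hrowB l₀ hl₀r hl₀ ⟨(i, l₀ * A), hi, hl₀A⟩ rfl⟩
          · exact h v hv
        have hcnt : (Rset.filter (fun v => PA v)).card ≤ mc.card * mr.card := by
          rw [← Finset.card_product]
          apply Finset.card_le_card_of_injOn (fun v : XVert f n => (v.val.1, v.val.2 / A))
          · intro v hvm
            rw [Finset.mem_coe, Finset.mem_filter] at hvm
            obtain ⟨hvR, hvA⟩ := hvm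
            rw [hRset, Finset.mem_filter] at hvR
            obtain ⟨-, hdvd⟩ := hvR
            obtain ⟨l, hl⟩ := hdvd
            have hq1 : v.val.2 / A = l := by rw [hl, Nat.mul_div_cancel_left _ hApos]
            have hlle : l ≤ f n := by
              have h2 := v.2.2; rw [hl] at h2
              exact Nat.le_of_mul_le_mul_left h2 hApos
            rw [Finset.mem_coe, Finset.mem_product]
            constructor
            · by_contra hnm
              exact hdisj2 v ⟨hvA, hcolB' v.val.1 v.2.1 hnm v rfl⟩
            · show v.val.2 / A ∈ mr
              rw [hq1]
              by_contra hnm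
              exact hdisj2 v ⟨hvA, hrowB l hlle hnm v (by rw [hl, Nat.mul_comm])⟩
          · intro v hv v' hv' heq
            rw [Finset.mem_coe, Finset.mem_filter, hRset, Finset.mem_filter] at hv hv'
            have hd1 := hv.1.2
            have hd2 := hv'.1.2
            rw [Prod.mk.injEq] at heq
            refine xext heq.1 ?_
            have e1 : v.val.2 / A * A = v.val.2 := Nat.div_mul_cancel hd1
            have e2 : v'.val.2 / A * A = v'.val.2 := Nat.div_mul_cancel hd2
            rw [← e1, ← e2, heq.2]
        show 4 * (Rset.filter (fun v => PA v)).card ≤ k * k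
        omega
    -- first-edge chooser
    have hstep : ∀ z : YTVert f, GF.Reachable (φ x₀) z → z ≠ w →
        ∃ x : YTVert f, GF.Adj w x ∧ (GF \ fromEdgeSet {s(w,x)}).Reachable x z := by
      intro z hz hzw
      have hwz : GF.Reachable w z := hwT.symm.trans hz
      obtain ⟨p0⟩ := hwz
      obtain ⟨x, h, q, hq⟩ := SimpleGraph.Walk.exists_eq_cons_of_ne (Ne.symm hzw) p0.toPath.val
      refine ⟨x, h, ⟨q.transfer _ ?_⟩⟩
      intro e he
      have hwsup : w ∉ q.support := by
        have hnd := p0.toPath.prop.support_nodup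
        rw [hq, SimpleGraph.Walk.support_cons] at hnd
        exact (List.nodup_cons.mp hnd).1
      rw [SimpleGraph.edgeSet_sdiff, Set.mem_diff]
      refine ⟨q.edges_subset_edgeSet he, ?_⟩
      rw [SimpleGraph.edgeSet_fromEdgeSet]
      rintro ⟨he', -⟩
      rw [Set.mem_singleton_iff] at he'
      exact hwsup (q.fst_mem_support_of_mem_edges (he' ▸ he))
    -- far sides of the minimum are small
    have hfar : ∀ x : YTVert f, GF.Adj w x →
        4 * (Rset.filter (fun v => (GF \ fromEdgeSet {s(w,x)}).Reachable x (φ v))).card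
          ≤ k * k := by
      intro x hwx
      rcases cutbound w x hwx hwT with hgood | hbad
      · exact hgood
      · exfalso
        have hsplit3 : ∀ v : XVert f n,
            (GF \ fromEdgeSet {s(w,x)}).Reachable w (φ v) ∨
            (GF \ fromEdgeSet {s(w,x)}).Reachable x (φ v) := hΦside w x hwx hwT
        have hdisj3 : ∀ z : YTVert f,
            ¬((GF \ fromEdgeSet {s(w,x)}).Reachable w z ∧
              (GF \ fromEdgeSet {s(w,x)}).Reachable x z) := hdisjE w x hwx
        have hpt : ∀ v ∈ Rset,
            GF.dist (φ v) x + (if (GF \ fromEdgeSet {s(w,x)}).Reachable x (φ v) then 1 else 0)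
            = GF.dist (φ v) w
              + (if (GF \ fromEdgeSet {s(w,x)}).Reachable w (φ v) then 1 else 0) := by
          intro v _
          rcases hsplit3 v with hW | hX
          · rw [if_neg (fun hX => hdisj3 (φ v) ⟨hW, hX⟩), if_pos hW]
            exact hdistlem w x hwx (φ v) hW
          · rw [if_pos hX, if_neg (fun hW => hdisj3 (φ v) ⟨hW, hX⟩)]
            have hsw : (GF \ fromEdgeSet {s(x,w)}).Reachable x (φ v) := by
              have hswap : s(x,w) = s(w,x) := Sym2.eq_swap
              rw [hswap]
              exact hX
            have := hdistlem x w hwx.symm (φ v) hsw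
            omega
        have hsum : μ x + (Rset.filter
              (fun v => (GF \ fromEdgeSet {s(w,x)}).Reachable x (φ v))).card
            = μ w + (Rset.filter
              (fun v => (GF \ fromEdgeSet {s(w,x)}).Reachable w (φ v))).card := by
          have h1 := Finset.sum_congr rfl hpt
          rw [Finset.sum_add_distrib, Finset.sum_add_distrib, Finset.sum_boole,
            Finset.sum_boole] at h1
          have e1 : μ x = ∑ v ∈ Rset, GF.dist (φ v) x := rfl
          have e2 : μ w = ∑ v ∈ Rset, GF.dist (φ v) w := rfl
          rw [e1, e2]
          exact_mod_cast h1
        have hpart : (Rset.filter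
              (fun v => (GF \ fromEdgeSet {s(w,x)}).Reachable w (φ v))).card
            + (Rset.filter
              (fun v => (GF \ fromEdgeSet {s(w,x)}).Reachable x (φ v))).card
            = Rset.card := by
          have h1 : Rset.filter
              (fun v => (GF \ fromEdgeSet {s(w,x)}).Reachable x (φ v))
              = Rset.filter
              (fun v => ¬ (GF \ fromEdgeSet {s(w,x)}).Reachable w (φ v)) := by
            apply Finset.filter_congr
            intro v _
            constructor
            · intro hX hW
              exact hdisj3 (φ v) ⟨hW, hX⟩
            · intro hnW
              exact (hsplit3 v).resolve_left hnW
          rw [h1]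
          exact Finset.card_filter_add_card_filter_not _
        have hnum : 2 * (k * k) < 4 * (f n * (f n + 1)) := by nlinarith [hk1]
        have hxT : x ∈ hTfin.toFinset := by
          rw [Set.Finite.mem_toFinset]
          exact hwT.trans hwx.reachable
        have hmin := hwmin x hxT
        omega
    -- final counting
    have hW0 : (Rset.filter (fun v => φ v = w)).card ≤ k := by
      refine le_trans (Finset.card_le_card ?_) (hfiber w)
      intro v hv
      rw [Finset.mem_filter] at hv ⊢
      exact ⟨Finset.mem_univ _, hv.2⟩
    set D := Rset.filter (fun v => ¬ φ v = w) with hD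
    have hDcard : (Rset.filter (fun v => φ v = w)).card + D.card = Rset.card :=
      Finset.card_filter_add_card_filter_not _
    have hchoice : ∀ v ∈ D, ∃ x : YTVert f, GF.Adj w x ∧
        (GF \ fromEdgeSet {s(w,x)}).Reachable x (φ v) := by
      intro v hv
      rw [hD, Finset.mem_filter] at hv
      exact hstep (φ v) (hφreach x₀ v) hv.2
    set ξ : XVert f n → YTVert f :=
      fun v => if h : v ∈ D then (hchoice v h).choose else w with hξ
    have hξ1 : ∀ v ∈ D, GF.Adj w (ξ v) := by
      intro v hv
      rw [hξ]
      simp only [dif_pos hv]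
      exact (hchoice v hv).choose_spec.1
    have hξ2 : ∀ v ∈ D, (GF \ fromEdgeSet {s(w, ξ v)}).Reachable (ξ v) (φ v) := by
      intro v hv
      rw [hξ]
      simp only [dif_pos hv]
      exact (hchoice v hv).choose_spec.2
    have himg4 : (D.image ξ).card ≤ 4 := by
      set dm : YTVert f → ℕ := fun x => if hgt x = hgt w + 1 then 0
        else if hgt w = hgt x + 1 then 1
        else if colY x = colY w + 1 then 2 else 3 with hdm
      have hinj : Set.InjOn dm ↑(D.image ξ) := by
        intro x hx x' hx' heq
        rw [Finset.mem_coe, Finset.mem_image] at hx hx'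
        obtain ⟨v, hv, rfl⟩ := hx
        obtain ⟨v', hv', rfl⟩ := hx'
        have hax : (Ytotal f).Adj w (ξ v) := hle (hξ1 v hv)
        have hax' : (Ytotal f).Adj w (ξ v') := hle (hξ1 v' hv')
        have hd := ytotal_adj_decomp hax
        have hd' := ytotal_adj_decomp hax'
        have hcoords : (ξ v).val.1 = (ξ v').val.1 := hd.1.symm.trans hd'.1
        have hcr : colY (ξ v) = colY (ξ v') ∧ hgt (ξ v) = hgt (ξ v') := by
          rw [hdm] at heq
          simp only at heq
          rcases hd.2 with ⟨hc, hv1 | hv1⟩ | ⟨hfl, -, hv1 | hv1⟩ <;>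
            rcases hd'.2 with ⟨hc', hv1' | hv1'⟩ | ⟨hfl', -, hv1' | hv1'⟩ <;>
            · split_ifs at heq <;> omega
        exact yext hcoords hcr.1 hcr.2
      calc (D.image ξ).card = ((D.image ξ).image dm).card :=
          (Finset.card_image_of_injOn hinj).symm
      _ ≤ (Finset.range 4).card := by
          apply Finset.card_le_card
          intro t ht
          rw [Finset.mem_image] at ht
          obtain ⟨x, hx, rfl⟩ := ht
          rw [Finset.mem_range, hdm]
          simp only
          split_ifs <;> omega
      _ = 4 := Finset.card_range 4
    have hDsum : D.card = ∑ x ∈ D.image ξ, (D.filter (fun v => ξ v = x)).card :=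
      Finset.card_eq_sum_card_image ξ D
    have hfib : ∀ x ∈ D.image ξ, 4 * (D.filter (fun v => ξ v = x)).card ≤ k * k := by
      intro x hx
      obtain ⟨v₁, hv₁, rfl⟩ := Finset.mem_image.mp hx
      have hadj := hξ1 v₁ hv₁
      have hsubf : D.filter (fun v => ξ v = ξ v₁) ⊆
          Rset.filter (fun v =>
            (GF \ fromEdgeSet {s(w, ξ v₁)}).Reachable (ξ v₁) (φ v)) := by
        intro v hv
        rw [Finset.mem_filter] at hv ⊢
        obtain ⟨hvD, hveq⟩ := hv
        have h2 := hξ2 v hvD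
        rw [hveq] at h2
        rw [hD, Finset.mem_filter] at hvD
        exact ⟨hvD.1, h2⟩
      have hle2 := Finset.card_le_card hsubf
      have hfar' := hfar (ξ v₁) hadj
      omega
    have hsum4 : 4 * D.card ≤ 4 * (k * k) := by
      rw [hDsum, Finset.mul_sum]
      calc ∑ x ∈ D.image ξ, 4 * (D.filter (fun v => ξ v = x)).card
          ≤ ∑ _x ∈ D.image ξ, k * k := Finset.sum_le_sum hfib
      _ = (D.image ξ).card * (k * k) := by rw [Finset.sum_const, smul_eq_mul]
      _ ≤ 4 * (k * k) := Nat.mul_le_mul_right _ himg4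
    have hfinal : 4 * (f n * (f n + 1)) ≤ 4 * k + 4 * (k * k) := by
      have h1 := hRcard
      omega
    nlinarith [hfinal, hk1]
end

section
/- For every n with f(n) ≥ 2 (equivalently n ≠ 1), every subgraph of X with at most N = (2^{2^{2n}}·f(n)+1)·f(n) vertices admits a coarse f(n)-wiring into Y with volume at most 2N; consequently wir^{f(n)}_{X→Y}(N) ≤ 2N. -/
open SimpleGraph

namespace S4

open SimpleGraph

/-! ### Arithmetic lemmas -/

lemma n_le_two_pow (k : ℕ) : k ≤ 2 ^ k := (Nat.lt_two_pow_self (n := k)).le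

lemma L1 (a b : ℕ) : (2 ^ a * b + 1) * b < 2 ^ (a + 2 * b + 2) := by
  have hb : b < 2 ^ b := Nat.lt_two_pow_self (n := b)
  have h1 : b * b ≤ 2 ^ b * 2 ^ b := Nat.mul_le_mul hb.le hb.le
  have h2 : (2 ^ a * b + 1) * b = 2 ^ a * (b * b) + b := by ring
  have h3 : 2 ^ a * (b * b) ≤ 2 ^ a * (2 ^ b * 2 ^ b) := Nat.mul_le_mul_left _ h1
  have h4 : 2 ^ a * (2 ^ b * 2 ^ b) = 2 ^ (a + 2 * b) := by
    rw [← pow_add, ← pow_add]; ring_nf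
  have h5 : b < 2 ^ (a + 2 * b) := lt_of_lt_of_le hb
    (Nat.pow_le_pow_right (by norm_num) (by omega))
  have h6 : 2 ^ (a + 2 * b) + 2 ^ (a + 2 * b) = 2 ^ (a + 2 * b + 1) := by
    rw [pow_succ]; ring
  have h7 : (2 ^ (a + 2 * b + 1) : ℕ) < 2 ^ (a + 2 * b + 2) :=
    Nat.pow_lt_pow_right (by norm_num) (by omega)
  omega

lemma L2 {a b m nn : ℕ} (hm1 : nn + 1 ≤ m) (hm2 : b + 1 ≤ m) (ha : a = 2 ^ (2 * nn)) :
    (2 ^ a * b + 1) * b < 2 ^ 2 ^ (2 * m) := by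
  have key : a + 2 * b + 2 ≤ 2 ^ (2 * m) := by
    have e1 : 2 ^ (2 * nn + 1) ≤ 2 ^ (2 * m - 1) :=
      Nat.pow_le_pow_right (by norm_num) (by omega)
    have e2 : 2 ^ (2 * b + 1) ≤ 2 ^ (2 * m - 1) :=
      Nat.pow_le_pow_right (by norm_num) (by omega)
    have e3 : 2 * b + 2 ≤ 2 ^ (2 * b + 1) := by
      have := Nat.lt_two_pow_self (n := 2 * b + 1); omega
    have e4 : 2 ^ (2 * nn + 1) = 2 * a := by rw [ha, pow_succ]; ring
    have e5 : 2 ^ (2 * m - 1) + 2 ^ (2 * m - 1) = 2 ^ (2 * m) := by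
      have h : 2 ^ (2 * m) = 2 ^ (2 * m - 1) * 2 := by
        rw [← pow_succ]; congr 1; omega
      omega
    omega
  exact lt_of_lt_of_le (L1 a b) (Nat.pow_le_pow_right (by norm_num) key)

lemma L3 {a b nn P : ℕ} (hP : nn + b + 1 ≤ P) (ha : a = 2 ^ (2 * nn)) :
    (2 ^ a * b + 1) * b < 2 ^ 2 ^ (2 * P + 1) := by
  have key : a + 2 * b + 2 ≤ 2 ^ (2 * P + 1) := by
    have e1 : 2 ^ (2 * nn + 1) ≤ 2 ^ (2 * P) :=
      Nat.pow_le_pow_right (by norm_num) (by omega)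
    have e2 : 2 ^ (2 * b + 1) ≤ 2 ^ (2 * P) :=
      Nat.pow_le_pow_right (by norm_num) (by omega)
    have e3 : 2 * b + 2 ≤ 2 ^ (2 * b + 1) := by
      have := Nat.lt_two_pow_self (n := 2 * b + 1); omega
    have e4 : 2 ^ (2 * nn + 1) = 2 * a := by rw [ha, pow_succ]; ring
    have e5 : 2 ^ (2 * P) + 2 ^ (2 * P) = 2 ^ (2 * P + 1) := by rw [pow_succ]; ring
    omega
  exact lt_of_lt_of_le (L1 a b) (Nat.pow_le_pow_right (by norm_num) key)

/-- the sum lemma : `∑_{m=1}^{n-1} f m * (2^(2^(2m+1)) * f m + 1) ≤ N`. -/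
lemma L4 {f : ℕ → ℕ} {n : ℕ} (hf1 : f 1 = 1)
    (hf : ∀ m, 2 ≤ m → 2 ≤ f m ∧ f m ≤ m) (hn2 : 2 ≤ n) (hfn : 2 ≤ f n) :
    (Finset.Ico 1 n).sum (fun m => f m * (2 ^ 2 ^ (2 * m + 1) * f m + 1))
      ≤ (2 ^ 2 ^ (2 * n) * f n + 1) * f n := by
  have hterm : ∀ m ∈ Finset.Ico 1 n,
      f m * (2 ^ 2 ^ (2 * m + 1) * f m + 1) ≤ 2 * n ^ 2 * 2 ^ 2 ^ (2 * n - 1) := by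
    intro m hm
    simp only [Finset.mem_Ico] at hm
    have hfm : f m ≤ m := by
      rcases Nat.lt_or_ge m 2 with h | h
      · interval_cases m <;> omega
      · exact (hf m h).2
    have hmn : m ≤ n - 1 := by omega
    have htm : (2 : ℕ) ^ 2 ^ (2 * m + 1) ≤ 2 ^ 2 ^ (2 * n - 1) :=
      Nat.pow_le_pow_right (by norm_num) (Nat.pow_le_pow_right (by norm_num) (by omega))
    have h1 : f m * (2 ^ 2 ^ (2 * m + 1) * f m + 1)
        ≤ m * (2 ^ 2 ^ (2 * n - 1) * m + 1) := by
      apply Nat.mul_le_mul hfm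
      have : 2 ^ 2 ^ (2 * m + 1) * f m ≤ 2 ^ 2 ^ (2 * n - 1) * m := Nat.mul_le_mul htm hfm
      omega
    have h2 : m * (2 ^ 2 ^ (2 * n - 1) * m + 1) ≤ 2 * n ^ 2 * 2 ^ 2 ^ (2 * n - 1) := by
      have hp : (1 : ℕ) ≤ 2 ^ 2 ^ (2 * n - 1) := Nat.one_le_two_pow
      have hmn' : m ≤ n := by omega
      calc m * (2 ^ 2 ^ (2 * n - 1) * m + 1)
          ≤ n * (2 ^ 2 ^ (2 * n - 1) * n + 2 ^ 2 ^ (2 * n - 1)) := by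
            apply Nat.mul_le_mul hmn'
            have := Nat.mul_le_mul_left (2 ^ 2 ^ (2 * n - 1)) hmn'
            omega
        _ = n * 2 ^ 2 ^ (2 * n - 1) * (n + 1) := by ring
        _ ≤ n * 2 ^ 2 ^ (2 * n - 1) * (2 * n) := by
            apply Nat.mul_le_mul_left; omega
        _ = 2 * n ^ 2 * 2 ^ 2 ^ (2 * n - 1) := by ring
    exact le_trans h1 h2
  have hsum : (Finset.Ico 1 n).sum (fun m => f m * (2 ^ 2 ^ (2 * m + 1) * f m + 1))
      ≤ n * (2 * n ^ 2 * 2 ^ 2 ^ (2 * n - 1)) := by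
    have h := Finset.sum_le_card_nsmul (Finset.Ico 1 n) _ _ hterm
    rw [Nat.card_Ico, smul_eq_mul] at h
    exact le_trans h (Nat.mul_le_mul_right _ (by omega))
  -- now `2 n^3 ≤ 2 ^ 2 ^ (2n-1)` and `N ≥ 4 * (2 ^ 2 ^ (2n-1))^2`
  have hcube : 2 * n ^ 3 ≤ 2 ^ 2 ^ (2 * n - 1) := by
    have h3n : 3 * n + 1 ≤ 2 ^ (2 * n - 1) := by
      have e1 : n ≤ 2 ^ (n - 1) := by
        have := Nat.lt_two_pow_self (n := n - 1); omega
      have e2 : (2 : ℕ) ^ (n - 1 + 2) = 2 ^ (n - 1) * 4 := by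
        rw [pow_add]; norm_num
      have e3 : (2 : ℕ) ^ (n - 1 + 2) ≤ 2 ^ (2 * n - 1) :=
        Nat.pow_le_pow_right (by norm_num) (by omega)
      omega
    calc 2 * n ^ 3 ≤ 2 ^ (3 * n + 1) := by
          have h1 : n ^ 3 ≤ 2 ^ (3 * n) := by
            have h2 : n ^ 3 ≤ (2 ^ n) ^ 3 := Nat.pow_le_pow_left (Nat.lt_two_pow_self (n := n)).le 3
            have h3 : ((2 : ℕ) ^ n) ^ 3 = 2 ^ (3 * n) := by
              rw [← pow_mul, Nat.mul_comm]
            omega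
          have h4 := pow_succ 2 (3 * n)
          omega
      _ ≤ 2 ^ 2 ^ (2 * n - 1) := Nat.pow_le_pow_right (by norm_num) h3n
  have hN : 2 ^ 2 ^ (2 * n - 1) * 2 ^ 2 ^ (2 * n - 1) * 4 ≤ (2 ^ 2 ^ (2 * n) * f n + 1) * f n := by
    have e1 : 2 ^ 2 ^ (2 * n - 1) * 2 ^ 2 ^ (2 * n - 1) = 2 ^ 2 ^ (2 * n) := by
      rw [← pow_add]; congr 1
      have : 2 * n - 1 + 1 = 2 * n := by omega
      calc 2 ^ (2 * n - 1) + 2 ^ (2 * n - 1) = 2 ^ (2 * n - 1 + 1) := by rw [pow_succ]; ring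
        _ = 2 ^ (2 * n) := by rw [this]
    calc 2 ^ 2 ^ (2 * n - 1) * 2 ^ 2 ^ (2 * n - 1) * 4 = 2 ^ 2 ^ (2 * n) * 4 := by rw [e1]
      _ ≤ 2 ^ 2 ^ (2 * n) * (f n * f n) := by
          apply Nat.mul_le_mul_left; nlinarith
      _ ≤ (2 ^ 2 ^ (2 * n) * f n + 1) * f n := by nlinarith
  calc (Finset.Ico 1 n).sum (fun m => f m * (2 ^ 2 ^ (2 * m + 1) * f m + 1))
      ≤ n * (2 * n ^ 2 * 2 ^ 2 ^ (2 * n - 1)) := hsum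
    _ = 2 * n ^ 3 * 2 ^ 2 ^ (2 * n - 1) := by ring
    _ ≤ 2 ^ 2 ^ (2 * n - 1) * 2 ^ 2 ^ (2 * n - 1) := Nat.mul_le_mul_right _ hcube
    _ ≤ 2 ^ 2 ^ (2 * n - 1) * 2 ^ 2 ^ (2 * n - 1) * 4 := by nlinarith
    _ ≤ (2 ^ 2 ^ (2 * n) * f n + 1) * f n := hN
  
end S4
namespace S4

open SimpleGraph

attribute [local instance] Classical.propDecidable

/-! ### Vertical walks in `Ytotal` -/

lemma Ytotal_adj_vert {f : ℕ → ℕ} (a b : YTVert f) (hP : a.val.1 = b.val.1)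
    (hi : a.val.2.1 = b.val.2.1) (hy : b.val.2.2 = a.val.2.2 + 1) :
    (Ytotal f).Adj a b := by
  show a ≠ b ∧ a.val.1 = b.val.1 ∧ (colStep (2 ^ 2 ^ (2 * a.val.1 + 1)) a.val.2 b.val.2 ∨
     colStep (2 ^ 2 ^ (2 * a.val.1 + 1)) b.val.2 a.val.2)
  refine ⟨?_, hP, Or.inl (Or.inl ⟨hi, hy⟩)⟩
  rintro rfl; omega

lemma Ytotal_adj_horiz {f : ℕ → ℕ} (a b : YTVert f) (hP : a.val.1 = b.val.1)
    (hy : a.val.2.2 = b.val.2.2) (hi : b.val.2.1 = a.val.2.1 + 1)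
    (hd : 2 ^ 2 ^ (2 * a.val.1 + 1) ∣ a.val.2.2) :
    (Ytotal f).Adj a b := by
  show a ≠ b ∧ a.val.1 = b.val.1 ∧ (colStep (2 ^ 2 ^ (2 * a.val.1 + 1)) a.val.2 b.val.2 ∨
     colStep (2 ^ 2 ^ (2 * a.val.1 + 1)) b.val.2 a.val.2)
  refine ⟨?_, hP, Or.inl (Or.inr ⟨hy, hd, hi⟩)⟩
  rintro rfl; omega

def vwalk (f : ℕ → ℕ) (P i : ℕ) (h1 : 1 ≤ P) (h2 : i < f P) (y : ℕ) :
    (l : ℕ) → (h3 : y + l ≤ 2 ^ 2 ^ (2 * P + 1) * f P) →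
      (Ytotal f).Walk ⟨(P, i, y), h1, h2, by show y ≤ 2 ^ 2 ^ (2 * P + 1) * f P; omega⟩
        ⟨(P, i, y + l), h1, h2, h3⟩
  | 0, _ => Walk.nil
  | l + 1, h3 =>
      (vwalk f P i h1 h2 y l
          (by have : y + (l+1) ≤ 2 ^ 2 ^ (2 * P + 1) * f P := h3; omega)).concat
        (Ytotal_adj_vert
          ⟨(P, i, y + l), h1, h2, by
            show y + l ≤ 2 ^ 2 ^ (2 * P + 1) * f P
            have : y + (l+1) ≤ 2 ^ 2 ^ (2 * P + 1) * f P := h3; omega⟩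
          ⟨(P, i, y + l + 1), h1, h2, h3⟩ rfl rfl rfl)

lemma vwalk_support (f : ℕ → ℕ) (P i : ℕ) (h1 : 1 ≤ P) (h2 : i < f P) (y : ℕ) :
    ∀ (l : ℕ) (h3 : y + l ≤ 2 ^ 2 ^ (2 * P + 1) * f P) (x : YTVert f),
      x ∈ (vwalk f P i h1 h2 y l h3).support → ∃ r ≤ l, x.val = (P, i, y + r)
  | 0, h3, x, hx => by
      simp only [vwalk, Walk.support_nil, List.mem_singleton] at hx
      change x ∈ [_] at hx; replace hx := List.mem_singleton.mp hx
      exact ⟨0, le_refl 0, by subst hx; rfl⟩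
  | l + 1, h3, x, hx => by
      simp only [vwalk, Walk.support_concat, List.concat_eq_append, List.mem_append,
        List.mem_singleton] at hx
      erw [Walk.support_concat] at hx; simp only [List.mem_append, List.mem_singleton] at hx
      rcases hx with hx | hx
      · obtain ⟨r, hr, hh⟩ := vwalk_support f P i h1 h2 y l (by omega) x hx
        exact ⟨r, by omega, hh⟩
      · replace hx := List.mem_singleton.mp hx
        exact ⟨l + 1, le_refl _, by subst hx; rfl⟩

lemma vwalk_edges (f : ℕ → ℕ) (P i : ℕ) (h1 : 1 ≤ P) (h2 : i < f P) (y : ℕ) :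
    ∀ (l : ℕ) (h3 : y + l ≤ 2 ^ 2 ^ (2 * P + 1) * f P) (e : Sym2 (YTVert f)),
      e ∈ (vwalk f P i h1 h2 y l h3).edges →
        ∃ r, r < l ∧ e.map Subtype.val = s((P, i, y + r), (P, i, y + r + 1))
  | 0, h3, e, he => by simp only [vwalk, Walk.edges_nil] at he; exact absurd he List.not_mem_nil
  | l + 1, h3, e, he => by
      simp only [vwalk, Walk.edges_concat, List.concat_eq_append, List.mem_append,
        List.mem_singleton] at he
      erw [Walk.edges_concat] at he
      simp only [List.concat_eq_append, List.mem_append, List.mem_singleton] at he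
      rcases he with he | he
      · obtain ⟨r, hr, hh⟩ := vwalk_edges f P i h1 h2 y l (by omega) e he
        exact ⟨r, by omega, hh⟩
      · exact ⟨l, by omega, by subst he; exact Sym2.map_pair_eq _ _ _⟩

end S4
namespace S4

open SimpleGraph

/-! ### Context -/

structure Ctx (f : ℕ → ℕ) (n : ℕ) (Γ : (Xtotal f).Subgraph) : Prop where
  hf1 : f 1 = 1
  hfle : ∀ m, 2 ≤ m → 2 ≤ f m ∧ f m ≤ m
  hinf : ∀ k, 2 ≤ k → {x : ℕ | f x = k}.Infinite
  hn : 2 ≤ f n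
  hfin : Γ.verts.Finite
  hcard : Γ.verts.ncard ≤ (2 ^ 2 ^ (2 * n) * f n + 1) * f n

attribute [local instance] Classical.propDecidable

variable {f : ℕ → ℕ} {n : ℕ} {Γ : (Xtotal f).Subgraph}

abbrev pc (v : ↥Γ.verts) : ℕ := v.val.val.1
abbrev cl (v : ↥Γ.verts) : ℕ := v.val.val.2.1
abbrev ht (v : ↥Γ.verts) : ℕ := v.val.val.2.2

lemma vert_bound (v : ↥Γ.verts) :
    1 ≤ pc v ∧ cl v < f (pc v) ∧ ht v ≤ 2 ^ 2 ^ (2 * pc v) * f (pc v) := v.val.prop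

lemma adjX {u v : ↥Γ.verts} (h : Γ.coe.Adj u v) : (Xtotal f).Adj u.val v.val :=
  Γ.adj_sub h

lemma adj_pc {u v : ↥Γ.verts} (h : Γ.coe.Adj u v) : pc u = pc v :=
  (show (u.val ≠ v.val ∧ u.val.val.1 = v.val.val.1 ∧ _) from adjX h).2.1

lemma adj_steps {u v : ↥Γ.verts} (h : Γ.coe.Adj u v) :
    colStep (2 ^ 2 ^ (2 * pc u)) u.val.val.2 v.val.val.2 ∨
    colStep (2 ^ 2 ^ (2 * pc u)) v.val.val.2 u.val.val.2 :=
  (show (u.val ≠ v.val ∧ u.val.val.1 = v.val.val.1 ∧ _) from adjX h).2.2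

/-- Structure of an edge of `Γ`. -/
lemma adj_shape {u v : ↥Γ.verts} (h : Γ.coe.Adj u v) :
    (cl u = cl v ∧ (ht v = ht u + 1 ∨ ht u = ht v + 1)) ∨
    (ht u = ht v ∧ 2 ^ 2 ^ (2 * pc u) ∣ ht u ∧ (cl v = cl u + 1 ∨ cl u = cl v + 1)) := by
  have eu1 : cl u = u.val.val.2.1 := rfl
  have eu2 : ht u = u.val.val.2.2 := rfl
  have ev1 : cl v = v.val.val.2.1 := rfl
  have ev2 : ht v = v.val.val.2.2 := rfl
  rcases adj_steps h with hc | hc <;>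
    rcases hc with ⟨h1, h2⟩ | ⟨h1, h2, h3⟩
  · exact Or.inl ⟨by omega, by omega⟩
  · exact Or.inr ⟨by omega, by rw [eu2]; exact h2, by omega⟩
  · exact Or.inl ⟨by omega, by omega⟩
  · exact Or.inr ⟨by omega, by rw [eu2, ← h1]; exact h2, by omega⟩

lemma adj_ht {u v : ↥Γ.verts} (h : Γ.coe.Adj u v) :
    ht v = ht u + 1 ∨ ht u = ht v + 1 ∨ ht u = ht v := by
  rcases adj_shape h with ⟨_, hc⟩ | ⟨hc, _⟩ <;> omega

/-! ### Discrete intermediate value theorem along walks -/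

lemma walk_ht_mem {u v : ↥Γ.verts} (w : Γ.coe.Walk u v) :
    ∀ y, min (ht u) (ht v) ≤ y → y ≤ max (ht u) (ht v) → ∃ x ∈ w.support, ht x = y := by
  induction w with
  | nil =>
    intro y h1 h2
    refine ⟨_, Walk.start_mem_support _, ?_⟩
    omega
  | @cons a b c hadj p ih =>
    intro y h1 h2
    by_cases hy : y = ht a
    · exact ⟨a, by simp, hy.symm⟩
    · have hd := adj_ht hadj
      obtain ⟨x, hx, hxy⟩ := ih y (by omega) (by omega)
      exact ⟨x, by simp [hx], hxy⟩

lemma reach_bound (C : Ctx f n Γ) {u v : ↥Γ.verts} (h : Γ.coe.Reachable u v) :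
    max (ht u) (ht v) < min (ht u) (ht v) + Γ.verts.ncard := by
  haveI := C.hfin.to_subtype
  obtain ⟨w⟩ := h
  set a := min (ht u) (ht v) with ha
  set b := max (ht u) (ht v) with hb
  set φ : ℕ → ↥Γ.verts := fun y =>
    if hy : a ≤ y ∧ y ≤ b then (walk_ht_mem w y hy.1 hy.2).choose else u with hφ
  have hφht : ∀ y, a ≤ y → y ≤ b → ht (φ y) = y := by
    intro y h1 h2
    rw [hφ]; simp only [dif_pos (And.intro h1 h2)]
    exact (walk_ht_mem w y h1 h2).choose_spec.2
  have hinj : Set.InjOn φ (Set.Icc a b) := by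
    intro y hy y' hy' heq
    have e1 := hφht y hy.1 hy.2
    have e2 := hφht y' hy'.1 hy'.2
    rw [heq] at e1; omega
  have h1 : (Set.Icc a b).ncard = (φ '' Set.Icc a b).ncard :=
    (Set.ncard_image_of_injOn hinj).symm
  have h2 : (φ '' Set.Icc a b).ncard ≤ (Set.univ : Set ↥Γ.verts).ncard :=
    Set.ncard_le_ncard (Set.subset_univ _) Set.finite_univ
  have h3 : (Set.univ : Set ↥Γ.verts).ncard = Γ.verts.ncard := by
    rw [Set.ncard_univ, Nat.card_coe_set_eq]
  have h4 : (Set.Icc a b).ncard = b + 1 - a := by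
    rw [← Finset.coe_Icc, Set.ncard_coe_finset, Nat.card_Icc]
  have hab : a ≤ b := min_le_max
  omega

/-! ### Connected components -/

instance XTVert.countable : Countable (XTVert f) := by unfold XTVert; infer_instance

instance cc_countable : Countable Γ.coe.ConnectedComponent := by
  unfold SimpleGraph.ConnectedComponent
  infer_instance

noncomputable def enc (Γ : (Xtotal f).Subgraph) : Γ.coe.ConnectedComponent → ℕ :=
  (Countable.exists_injective_nat _).choose

lemma enc_inj (Γ : (Xtotal f).Subgraph) : Function.Injective (enc Γ) :=
  (Countable.exists_injective_nat _).choose_spec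

abbrev cmp (v : ↥Γ.verts) : Γ.coe.ConnectedComponent := Γ.coe.connectedComponentMk v

lemma reach_pc {u v : ↥Γ.verts} (h : Γ.coe.Reachable u v) : pc u = pc v := by
  obtain ⟨w⟩ := h
  induction w with
  | nil => rfl
  | cons hadj p ih => exact (adj_pc hadj).trans ih

lemma cmp_pc {u v : ↥Γ.verts} (h : cmp u = cmp v) : pc u = pc v :=
  reach_pc (ConnectedComponent.exact h)

def HH (c : Γ.coe.ConnectedComponent) : Set ℕ :=
  {h | ∃ u v : ↥Γ.verts, Γ.coe.Adj u v ∧ cmp u = c ∧ ht u = h ∧ ht v = h}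

noncomputable def hgt (c : Γ.coe.ConnectedComponent) : ℕ :=
  if hc : (HH c).Nonempty then hc.choose else ht c.out

lemma hgt_attained (c : Γ.coe.ConnectedComponent) :
    ∃ x : ↥Γ.verts, cmp x = c ∧ ht x = hgt c := by
  unfold hgt
  split_ifs with hc
  · obtain ⟨u, v, hadj, hcu, hu, hv⟩ := hc.choose_spec
    exact ⟨u, hcu, hu⟩
  · exact ⟨c.out, Quot.out_eq c, rfl⟩

lemma horiz_dvd {u v : ↥Γ.verts} (h : Γ.coe.Adj u v) (hh : ht u = ht v) :
    2 ^ 2 ^ (2 * pc u) ∣ ht u ∧ (cl v = cl u + 1 ∨ cl u = cl v + 1) := by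
  rcases adj_shape h with ⟨_, hc⟩ | ⟨_, hd, hc⟩
  · omega
  · exact ⟨hd, hc⟩

/-- In a "case C" piece, the spacing exceeds the total number of vertices. -/
lemma caseC_sp (C : Ctx f n Γ) {m : ℕ} (hm1 : ¬ f m ≤ f n) (hm0 : 1 ≤ m) (hm2 : ¬ m < n) :
    (2 ^ 2 ^ (2 * n) * f n + 1) * f n < 2 ^ 2 ^ (2 * m) := by
  have hm : 2 ≤ m := by
    rcases Nat.lt_or_ge m 2 with h | h
    · exfalso; interval_cases m
      rw [C.hf1] at hm1; have := C.hn; omega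
    · exact h
  have h2 := C.hfle m hm
  have hne : m ≠ n := by rintro rfl; omega
  exact L2 (by omega) (by have := C.hn; omega) rfl

/-- All horizontal heights in a component of a case C piece agree with `hgt`. -/
lemma HH_unique (C : Ctx f n Γ) {c : Γ.coe.ConnectedComponent} {m : ℕ}
    (hmc : ∀ x : ↥Γ.verts, cmp x = c → pc x = m)
    (hsp : (2 ^ 2 ^ (2 * n) * f n + 1) * f n < 2 ^ 2 ^ (2 * m)) :
    ∀ h ∈ HH c, h = hgt c := by
  have key : ∀ h h', h ∈ HH c → h' ∈ HH c → h = h' := by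
    intro h h' hh hh'
    obtain ⟨u, v, hadj, hcu, hu, hv⟩ := hh
    obtain ⟨u', v', hadj', hcu', hu', hv'⟩ := hh'
    have hr : Γ.coe.Reachable u u' := ConnectedComponent.exact (hcu.trans hcu'.symm)
    have hbd := reach_bound C hr
    have hed : 2 ^ 2 ^ (2 * m) ∣ h := by
      have := (horiz_dvd hadj (by omega)).1
      rwa [hmc u hcu, hu] at this
    have hed' : 2 ^ 2 ^ (2 * m) ∣ h' := by
      have := (horiz_dvd hadj' (by omega)).1
      rwa [hmc u' hcu', hu'] at this
    have hcard := C.hcard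
    have hdiff : (h ≤ h' ∧ 2 ^ 2 ^ (2 * m) ∣ h' - h) ∨ (h' ≤ h ∧ 2 ^ 2 ^ (2 * m) ∣ h - h') := by
      rcases Nat.le_total h h' with hl | hl
      · exact Or.inl ⟨hl, Nat.dvd_sub hed' hed⟩
      · exact Or.inr ⟨hl, Nat.dvd_sub hed hed'⟩
    rcases hdiff with ⟨hl, hd⟩ | ⟨hl, hd⟩
    · rcases Nat.eq_zero_or_pos (h' - h) with h0 | h0
      · omega
      · have := Nat.le_of_dvd h0 hd; omega
    · rcases Nat.eq_zero_or_pos (h - h') with h0 | h0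
      · omega
      · have := Nat.le_of_dvd h0 hd; omega
  intro h hh
  have hne : (HH c).Nonempty := ⟨h, hh⟩
  have : hgt c ∈ HH c := by
    unfold hgt; rw [dif_pos hne]; exact hne.choose_spec
  exact key h _ hh this

lemma cmp_ht_bound (C : Ctx f n Γ) (v : ↥Γ.verts) :
    max (ht v) (hgt (cmp v)) < min (ht v) (hgt (cmp v)) + Γ.verts.ncard := by
  obtain ⟨x, hx, hhx⟩ := hgt_attained (cmp v)
  have hr : Γ.coe.Reachable v x := ConnectedComponent.exact hx.symm
  have := reach_bound C hr
  omega

end S4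
namespace S4

open SimpleGraph

attribute [local instance] Classical.propDecidable

variable {f : ℕ → ℕ} {n : ℕ} {Γ : (Xtotal f).Subgraph}

/-! ### Fresh target pieces -/

noncomputable def tg (f : ℕ → ℕ) (n w c : ℕ) : ℕ :=
  Nat.nth (fun x => f x = w) (n + f n + 1 + c)

lemma tg_f (C : Ctx f n Γ) {w : ℕ} (hw : 2 ≤ w) (c : ℕ) : f (tg f n w c) = w :=
  Nat.nth_mem_of_infinite (C.hinf w hw) _

lemma tg_ge (C : Ctx f n Γ) {w : ℕ} (hw : 2 ≤ w) (c : ℕ) : n + f n + 1 + c ≤ tg f n w c :=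
  (Nat.nth_strictMono (C.hinf w hw)).le_apply

lemma tg_inj (C : Ctx f n Γ) {w w' c c' : ℕ} (hw : 2 ≤ w) (hw' : 2 ≤ w')
    (h : tg f n w c = tg f n w' c') : w = w' ∧ c = c' := by
  have h1 : w = w' := by rw [← tg_f C hw c, ← tg_f C hw' c', h]
  subst h1
  have := Nat.nth_injective (C.hinf w hw) h
  exact ⟨rfl, by omega⟩

/-! ### The vertex map -/

noncomputable def F (C : Ctx f n Γ) (v : ↥Γ.verts) : YTVert f :=
  if hB : f (pc v) ≤ f n then
    ⟨(tg f n (f n) (pc v), 0, ht v), by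
      have h1 := tg_ge C C.hn (pc v)
      have h2 := tg_f C C.hn (pc v)
      have h3 := vert_bound v
      refine ⟨by show 1 ≤ tg f n (f n) (pc v); omega,
        by show 0 < f (tg f n (f n) (pc v)); rw [h2]; have := C.hn; omega, ?_⟩
      show ht v ≤ 2 ^ 2 ^ (2 * tg f n (f n) (pc v) + 1) * f (tg f n (f n) (pc v))
      have h4 : 2 ^ 2 ^ (2 * pc v) ≤ 2 ^ 2 ^ (2 * tg f n (f n) (pc v) + 1) :=
        Nat.pow_le_pow_right (by norm_num) (Nat.pow_le_pow_right (by norm_num) (by omega))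
      calc ht v ≤ 2 ^ 2 ^ (2 * pc v) * f (pc v) := h3.2.2
        _ ≤ 2 ^ 2 ^ (2 * tg f n (f n) (pc v) + 1) * f (tg f n (f n) (pc v)) := by
            rw [h2]; exact Nat.mul_le_mul h4 hB⟩
  else if hA : pc v < n then
    ⟨(pc v, cl v, ht v * 2 ^ 2 ^ (2 * pc v)), by
      have h3 := vert_bound v
      refine ⟨h3.1, h3.2.1, ?_⟩
      show ht v * 2 ^ 2 ^ (2 * pc v) ≤ 2 ^ 2 ^ (2 * pc v + 1) * f (pc v)
      have e : 2 ^ 2 ^ (2 * pc v + 1) = 2 ^ 2 ^ (2 * pc v) * 2 ^ 2 ^ (2 * pc v) := by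
        rw [← pow_add]; congr 1; rw [pow_succ]; ring
      calc ht v * 2 ^ 2 ^ (2 * pc v)
          ≤ 2 ^ 2 ^ (2 * pc v) * f (pc v) * 2 ^ 2 ^ (2 * pc v) :=
            Nat.mul_le_mul_right _ h3.2.2
        _ = 2 ^ 2 ^ (2 * pc v + 1) * f (pc v) := by rw [e]; ring⟩
  else
    ⟨(tg f n (f (pc v)) (n + 1 + enc Γ (cmp v)), cl v,
       ht v + 2 ^ 2 ^ (2 * tg f n (f (pc v)) (n + 1 + enc Γ (cmp v)) + 1) - hgt (cmp v)), by
      have hw : 2 ≤ f (pc v) := by have := C.hn; omega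
      have h1 := tg_ge C hw (n + 1 + enc Γ (cmp v))
      have h2 := tg_f C hw (n + 1 + enc Γ (cmp v))
      have h3 := vert_bound v
      refine ⟨by show 1 ≤ tg f n (f (pc v)) (n + 1 + enc Γ (cmp v)); omega,
        by show cl v < f (tg f n (f (pc v)) (n + 1 + enc Γ (cmp v))); rw [h2]; exact h3.2.1,
        ?_⟩
      show ht v + 2 ^ 2 ^ (2 * tg f n (f (pc v)) (n + 1 + enc Γ (cmp v)) + 1) - hgt (cmp v)
        ≤ 2 ^ 2 ^ (2 * tg f n (f (pc v)) (n + 1 + enc Γ (cmp v)) + 1)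
          * f (tg f n (f (pc v)) (n + 1 + enc Γ (cmp v)))
      have hNB : (2 ^ 2 ^ (2 * n) * f n + 1) * f n
          < 2 ^ 2 ^ (2 * tg f n (f (pc v)) (n + 1 + enc Γ (cmp v)) + 1) := L3 (by omega) rfl
      have hbd := cmp_ht_bound C v
      have hcd := C.hcard
      have h2T : 2 ^ 2 ^ (2 * tg f n (f (pc v)) (n + 1 + enc Γ (cmp v)) + 1) * 2
          ≤ 2 ^ 2 ^ (2 * tg f n (f (pc v)) (n + 1 + enc Γ (cmp v)) + 1)
            * f (tg f n (f (pc v)) (n + 1 + enc Γ (cmp v))) :=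
        Nat.mul_le_mul_left _ (by omega)
      omega⟩

lemma F_val_B (C : Ctx f n Γ) {v : ↥Γ.verts} (hB : f (pc v) ≤ f n) :
    (F C v).val = (tg f n (f n) (pc v), 0, ht v) := by
  unfold F; exact congrArg Subtype.val (dif_pos hB)

lemma F_val_A (C : Ctx f n Γ) {v : ↥Γ.verts} (hB : ¬ f (pc v) ≤ f n) (hA : pc v < n) :
    (F C v).val = (pc v, cl v, ht v * 2 ^ 2 ^ (2 * pc v)) := by
  have h1 : F C v = _ := dif_neg hB
  exact (congrArg Subtype.val h1).trans (congrArg Subtype.val (dif_pos hA))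

lemma F_val_C (C : Ctx f n Γ) {v : ↥Γ.verts} (hB : ¬ f (pc v) ≤ f n) (hA : ¬ pc v < n) :
    (F C v).val = (tg f n (f (pc v)) (n + 1 + enc Γ (cmp v)), cl v,
      ht v + 2 ^ 2 ^ (2 * tg f n (f (pc v)) (n + 1 + enc Γ (cmp v)) + 1) - hgt (cmp v)) := by
  have h1 : F C v = _ := dif_neg hB
  exact (congrArg Subtype.val h1).trans (congrArg Subtype.val (dif_neg hA))

/-- in case C, `hgt (cmp v)` is within reach of `ht v` : `hgt ≤ ht v + T` etc. -/
lemma caseC_hgt_bound (C : Ctx f n Γ) {v : ↥Γ.verts} (hB : ¬ f (pc v) ≤ f n)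
    (hA : ¬ pc v < n) :
    hgt (cmp v) < ht v + 2 ^ 2 ^ (2 * tg f n (f (pc v)) (n + 1 + enc Γ (cmp v)) + 1) ∧
    ht v < hgt (cmp v) + 2 ^ 2 ^ (2 * tg f n (f (pc v)) (n + 1 + enc Γ (cmp v)) + 1) := by
  have hw : 2 ≤ f (pc v) := by have := C.hn; omega
  have h1 := tg_ge C hw (n + 1 + enc Γ (cmp v))
  have hNB : (2 ^ 2 ^ (2 * n) * f n + 1) * f n
      < 2 ^ 2 ^ (2 * tg f n (f (pc v)) (n + 1 + enc Γ (cmp v)) + 1) := L3 (by omega) rfl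
  have hbd := cmp_ht_bound C v
  have hcd := C.hcard
  omega

end S4
namespace S4

open SimpleGraph

attribute [local instance] Classical.propDecidable

variable {f : ℕ → ℕ} {n : ℕ} {Γ : (Xtotal f).Subgraph}

lemma adj_cmp {u v : ↥Γ.verts} (h : Γ.coe.Adj u v) : cmp u = cmp v :=
  ConnectedComponent.sound h.reachable

lemma colStep_asymm {t t' : ℕ} {p q : ℕ × ℕ} (h1 : colStep t p q) (h2 : colStep t' q p) :
    False := by
  rcases h1 with ⟨a1, a2⟩ | ⟨a1, a2, a3⟩ <;> rcases h2 with ⟨b1, b2⟩ | ⟨b1, b2, b3⟩ <;> omega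

lemma colStep_vert {u v : ↥Γ.verts}
    (hc : colStep (2 ^ 2 ^ (2 * pc u)) u.val.val.2 v.val.val.2) (hv : ht v = ht u + 1) :
    cl u = cl v := by
  have eu1 : cl u = u.val.val.2.1 := rfl
  have eu2 : ht u = u.val.val.2.2 := rfl
  have ev1 : cl v = v.val.val.2.1 := rfl
  have ev2 : ht v = v.val.val.2.2 := rfl
  rcases hc with ⟨h1, h2⟩ | ⟨h1, h2, h3⟩ <;> omega

lemma colStep_horiz {u v : ↥Γ.verts}
    (hc : colStep (2 ^ 2 ^ (2 * pc u)) u.val.val.2 v.val.val.2) (hv : ¬ ht v = ht u + 1) :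
    ht u = ht v ∧ 2 ^ 2 ^ (2 * pc u) ∣ ht u ∧ cl v = cl u + 1 := by
  have eu1 : cl u = u.val.val.2.1 := rfl
  have eu2 : ht u = u.val.val.2.2 := rfl
  have ev1 : cl v = v.val.val.2.1 := rfl
  have ev2 : ht v = v.val.val.2.2 := rfl
  rcases hc with ⟨h1, h2⟩ | ⟨h1, h2, h3⟩
  · omega
  · exact ⟨by omega, by rw [eu2]; exact h2, by omega⟩

/-- data for the vertical case: the images lie in the same column, with the
image of `v` above that of `u`. -/
lemma vertD (C : Ctx f n Γ) {u v : ↥Γ.verts} (h : Γ.coe.Adj u v) (hv : ht v = ht u + 1)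
    (hcl : cl u = cl v) :
    (F C u).val.1 = (F C v).val.1 ∧ (F C u).val.2.1 = (F C v).val.2.1 ∧
      (F C u).val.2.2 ≤ (F C v).val.2.2 := by
  have hpc := adj_pc h
  have hcm := adj_cmp h
  by_cases hB : f (pc u) ≤ f n
  · have hBv : f (pc v) ≤ f n := by rwa [← hpc]
    rw [F_val_B C hB, F_val_B C hBv]
    exact ⟨by rw [hpc], rfl, by show ht u ≤ ht v; omega⟩
  · have hBv : ¬ f (pc v) ≤ f n := by rwa [← hpc]
    by_cases hA : pc u < n
    · have hAv : pc v < n := by rwa [← hpc]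
      rw [F_val_A C hB hA, F_val_A C hBv hAv]
      refine ⟨by rw [hpc], by show cl u = cl v; exact hcl, ?_⟩
      show ht u * 2 ^ 2 ^ (2 * pc u) ≤ ht v * 2 ^ 2 ^ (2 * pc v)
      rw [← hpc]
      exact Nat.mul_le_mul_right _ (by omega)
    · have hAv : ¬ pc v < n := by rwa [← hpc]
      rw [F_val_C C hB hA, F_val_C C hBv hAv]
      refine ⟨by rw [hpc, hcm], by show cl u = cl v; exact hcl, ?_⟩
      show ht u + 2 ^ 2 ^ (2 * tg f n (f (pc u)) (n + 1 + enc Γ (cmp u)) + 1) - hgt (cmp u)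
        ≤ ht v + 2 ^ 2 ^ (2 * tg f n (f (pc v)) (n + 1 + enc Γ (cmp v)) + 1) - hgt (cmp v)
      rw [← hpc, ← hcm]
      omega

/-- data for the horizontal case: either the images agree (case B), or they are
adjacent in `Y` (cases A and C). -/
lemma horizD (C : Ctx f n Γ) {u v : ↥Γ.verts} (h : Γ.coe.Adj u v) (hh : ht u = ht v)
    (hdv : 2 ^ 2 ^ (2 * pc u) ∣ ht u) (hcl : cl v = cl u + 1) :
    F C u = F C v ∨ (Ytotal f).Adj (F C u) (F C v) := by
  have hpc := adj_pc h
  have hcm := adj_cmp h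
  by_cases hB : f (pc u) ≤ f n
  · have hBv : f (pc v) ≤ f n := by rwa [← hpc]
    left
    apply Subtype.ext
    rw [F_val_B C hB, F_val_B C hBv, hpc, hh]
  · have hBv : ¬ f (pc v) ≤ f n := by rwa [← hpc]
    right
    by_cases hA : pc u < n
    · have hAv : pc v < n := by rwa [← hpc]
      apply Ytotal_adj_horiz
      · rw [F_val_A C hB hA, F_val_A C hBv hAv]; exact hpc
      · rw [F_val_A C hB hA, F_val_A C hBv hAv]
        show ht u * 2 ^ 2 ^ (2 * pc u) = ht v * 2 ^ 2 ^ (2 * pc v)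
        rw [hh, hpc]
      · rw [F_val_A C hB hA, F_val_A C hBv hAv]
        show cl v = cl u + 1; exact hcl
      · rw [F_val_A C hB hA]
        show 2 ^ 2 ^ (2 * pc u + 1) ∣ ht u * 2 ^ 2 ^ (2 * pc u)
        obtain ⟨q, hq⟩ := hdv
        refine ⟨q, ?_⟩
        rw [hq]
        have e : 2 ^ 2 ^ (2 * pc u + 1) = 2 ^ 2 ^ (2 * pc u) * 2 ^ 2 ^ (2 * pc u) := by
          rw [← pow_add]; congr 1; rw [pow_succ]; ring
        rw [e]; ring
    · have hAv : ¬ pc v < n := by rwa [← hpc]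
      -- the common height is the distinguished height of the component
      have hHH : ht u ∈ HH (cmp u) := ⟨u, v, h, rfl, rfl, hh.symm⟩
      have hmc : ∀ x : ↥Γ.verts, cmp x = cmp u → pc x = pc u := fun x hx => cmp_pc hx
      have hsp := caseC_sp C hB (vert_bound u).1 hA
      have hhg : ht u = hgt (cmp u) := HH_unique C hmc hsp _ hHH
      apply Ytotal_adj_horiz
      · rw [F_val_C C hB hA, F_val_C C hBv hAv]
        show tg f n (f (pc u)) (n + 1 + enc Γ (cmp u)) = tg f n (f (pc v)) (n + 1 + enc Γ (cmp v))
        rw [hpc, hcm]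
      · rw [F_val_C C hB hA, F_val_C C hBv hAv]
        show ht u + 2 ^ 2 ^ (2 * tg f n (f (pc u)) (n + 1 + enc Γ (cmp u)) + 1) - hgt (cmp u)
          = ht v + 2 ^ 2 ^ (2 * tg f n (f (pc v)) (n + 1 + enc Γ (cmp v)) + 1) - hgt (cmp v)
        rw [← hpc, ← hcm, ← hh]
      · rw [F_val_C C hB hA, F_val_C C hBv hAv]
        show cl v = cl u + 1; exact hcl
      · rw [F_val_C C hB hA]
        show 2 ^ 2 ^ (2 * tg f n (f (pc u)) (n + 1 + enc Γ (cmp u)) + 1)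
          ∣ ht u + 2 ^ 2 ^ (2 * tg f n (f (pc u)) (n + 1 + enc Γ (cmp u)) + 1) - hgt (cmp u)
        have heq : ht u + 2 ^ 2 ^ (2 * tg f n (f (pc u)) (n + 1 + enc Γ (cmp u)) + 1)
            - hgt (cmp u) = 2 ^ 2 ^ (2 * tg f n (f (pc u)) (n + 1 + enc Γ (cmp u)) + 1) := by
          rw [hhg, Nat.add_sub_cancel_left]
        rw [heq]

/-! ### The walks -/

noncomputable def fwd (C : Ctx f n Γ) (u v : ↥Γ.verts) (h : Γ.coe.Adj u v)
    (hc : colStep (2 ^ 2 ^ (2 * pc u)) u.val.val.2 v.val.val.2) :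
    (Ytotal f).Walk (F C u) (F C v) :=
  if hv : ht v = ht u + 1 then
    (vwalk f (F C u).val.1 (F C u).val.2.1 (F C u).prop.1 (F C u).prop.2.1 (F C u).val.2.2
        ((F C v).val.2.2 - (F C u).val.2.2)
        (by
          have d := vertD C h hv (colStep_vert hc hv)
          have b := (F C v).prop.2.2
          rw [d.1]
          omega)).copy
      (Subtype.ext rfl)
      (by
        apply Subtype.ext
        have d := vertD C h hv (colStep_vert hc hv)
        show ((F C u).val.1, (F C u).val.2.1, (F C u).val.2.2
            + ((F C v).val.2.2 - (F C u).val.2.2)) = (F C v).val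
        have e : (F C v).val = ((F C v).val.1, (F C v).val.2.1, (F C v).val.2.2) := rfl
        rw [e, d.1, d.2.1]
        have e2 : (F C u).val.2.2 + ((F C v).val.2.2 - (F C u).val.2.2)
            = (F C v).val.2.2 := by omega
        rw [e2])
  else
    if he : F C u = F C v then Walk.nil.copy rfl he
    else
      Walk.cons
        ((horizD C h (colStep_horiz hc hv).1 (colStep_horiz hc hv).2.1
            (colStep_horiz hc hv).2.2).resolve_left he)
        Walk.nil

noncomputable def wk (C : Ctx f n Γ) (u v : ↥Γ.verts) (h : Γ.coe.Adj u v) :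
    (Ytotal f).Walk (F C u) (F C v) :=
  if hc : colStep (2 ^ 2 ^ (2 * pc u)) u.val.val.2 v.val.val.2 then fwd C u v h hc
  else
    (fwd C v u h.symm
        (by
          have hcv := (adj_steps h).resolve_left hc
          rwa [adj_pc h] at hcv)).reverse

lemma wk_symm (C : Ctx f n Γ) (u v : ↥Γ.verts) (h : Γ.coe.Adj u v) :
    wk C v u (Γ.coe.adj_symm h) = (wk C u v h).reverse := by
  by_cases hc : colStep (2 ^ 2 ^ (2 * pc u)) u.val.val.2 v.val.val.2
  · have hc' : ¬ colStep (2 ^ 2 ^ (2 * pc v)) v.val.val.2 u.val.val.2 := by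
      intro hcontra
      exact colStep_asymm hc hcontra
    rw [wk, dif_neg hc', wk, dif_pos hc]
  · have hc2 : colStep (2 ^ 2 ^ (2 * pc v)) v.val.val.2 u.val.val.2 := by
      have hcv := (adj_steps h).resolve_left hc
      rwa [adj_pc h] at hcv
    rw [wk, dif_pos hc2, wk, dif_neg hc, Walk.reverse_reverse]

end S4
namespace S4

open SimpleGraph

attribute [local instance] Classical.propDecidable

variable {f : ℕ → ℕ} {n : ℕ} {Γ : (Xtotal f).Subgraph}

lemma prod3_ext {a b : ℕ × ℕ × ℕ} (h1 : a.1 = b.1) (h2 : a.2.1 = b.2.1)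
    (h3 : a.2.2 = b.2.2) : a = b := by
  obtain ⟨x, y, z⟩ := a; obtain ⟨x', y', z'⟩ := b
  simp only [] at h1 h2 h3
  subst h1; subst h2; subst h3; rfl

lemma vert_ext {u u' : ↥Γ.verts} (h1 : pc u = pc u') (h2 : cl u = cl u')
    (h3 : ht u = ht u') : u = u' :=
  Subtype.ext (Subtype.ext (prod3_ext h1 h2 h3))

/-- helper for ℕ-subtraction arithmetic with an abstract `T`. -/
lemma sub_helper {a b T g : ℕ} (hab : b = a + 1) (hg : g < a + T) :
    b + T - g = (a + T - g) + 1 := by omega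

/-! ### Target piece recovery -/

/-- Two vertices whose images lie in the same piece of `Y` belong to the same
"unit" of the wiring. -/
lemma TP_eq (C : Ctx f n Γ) {u u' : ↥Γ.verts} (h : (F C u).val.1 = (F C u').val.1) :
    (f (pc u) ≤ f n ∧ f (pc u') ≤ f n ∧ pc u = pc u') ∨
    (¬ f (pc u) ≤ f n ∧ ¬ f (pc u') ≤ f n ∧ pc u < n ∧ pc u' < n ∧ pc u = pc u') ∨
    (¬ f (pc u) ≤ f n ∧ ¬ f (pc u') ≤ f n ∧ ¬ pc u < n ∧ ¬ pc u' < n ∧ pc u = pc u' ∧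
      cmp u = cmp u') := by
  have hn2 : 2 ≤ f n := C.hn
  by_cases hB : f (pc u) ≤ f n <;> by_cases hB' : f (pc u') ≤ f n
  · -- B, B
    rw [F_val_B C hB, F_val_B C hB'] at h
    have := tg_inj C C.hn C.hn (h : tg f n (f n) (pc u) = tg f n (f n) (pc u'))
    exact Or.inl ⟨hB, hB', this.2⟩
  · -- B, not-B
    exfalso
    by_cases hA' : pc u' < n
    · rw [F_val_B C hB, F_val_A C hB' hA'] at h
      have := tg_ge C C.hn (pc u)
      simp only [] at h
      omega
    · rw [F_val_B C hB, F_val_C C hB' hA'] at h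
      have hw' : 2 ≤ f (pc u') := by omega
      have := (tg_inj C C.hn hw' h).1
      omega
  · -- not-B, B
    exfalso
    by_cases hA : pc u < n
    · rw [F_val_A C hB hA, F_val_B C hB'] at h
      have := tg_ge C C.hn (pc u')
      simp only [] at h
      omega
    · rw [F_val_C C hB hA, F_val_B C hB'] at h
      have hw : 2 ≤ f (pc u) := by omega
      have := (tg_inj C hw C.hn h).1
      omega
  · -- not-B, not-B
    by_cases hA : pc u < n <;> by_cases hA' : pc u' < n
    · rw [F_val_A C hB hA, F_val_A C hB' hA'] at h
      exact Or.inr (Or.inl ⟨hB, hB', hA, hA', h⟩)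
    · exfalso
      rw [F_val_A C hB hA, F_val_C C hB' hA'] at h
      have hw' : 2 ≤ f (pc u') := by omega
      have := tg_ge C hw' (n + 1 + enc Γ (cmp u'))
      simp only [] at h
      omega
    · exfalso
      rw [F_val_C C hB hA, F_val_A C hB' hA'] at h
      have hw : 2 ≤ f (pc u) := by omega
      have := tg_ge C hw (n + 1 + enc Γ (cmp u))
      simp only [] at h
      omega
    · rw [F_val_C C hB hA, F_val_C C hB' hA'] at h
      have hw : 2 ≤ f (pc u) := by omega
      have hw' : 2 ≤ f (pc u') := by omega
      have hinj := tg_inj C hw hw' h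
      have hcm : cmp u = cmp u' := enc_inj Γ (by omega)
      exact Or.inr (Or.inr ⟨hB, hB', hA, hA', cmp_pc hcm, hcm⟩)

/-! ### Shapes of edges on forward walks -/

lemma shape_B (C : Ctx f n Γ) {u v : ↥Γ.verts} {h : Γ.coe.Adj u v}
    {hc : colStep (2 ^ 2 ^ (2 * pc u)) u.val.val.2 v.val.val.2} {e : Sym2 (YTVert f)}
    (hB : f (pc u) ≤ f n) (he : e ∈ (fwd C u v h hc).edges) :
    ht v = ht u + 1 ∧ cl u = cl v ∧ e.map Subtype.val =
      s((tg f n (f n) (pc u), 0, ht u), (tg f n (f n) (pc u), 0, ht u + 1)) := by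
  have hpc := adj_pc h
  have hBv : f (pc v) ≤ f n := by rwa [← hpc]
  have eu : (F C u).val = (tg f n (f n) (pc u), 0, ht u) := F_val_B C hB
  have ev : (F C v).val = (tg f n (f n) (pc v), 0, ht v) := F_val_B C hBv
  unfold fwd at he
  split_ifs at he with hv hFeq
  · erw [Walk.edges_copy] at he
    obtain ⟨r, hr, hmap⟩ := vwalk_edges f _ _ _ _ _ _ _ e he
    have hl : (F C v).val.2.2 - (F C u).val.2.2 = 1 := by
      rw [eu, ev]; show ht v - ht u = 1; omega
    rw [hl] at hr
    have hr0 : r = 0 := by omega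
    subst hr0
    refine ⟨hv, colStep_vert hc hv, ?_⟩
    rw [hmap, eu]
    try rfl
  · simp only [Walk.edges_copy, Walk.edges_nil] at he
    exact absurd he List.not_mem_nil
  · exfalso
    obtain ⟨hh, hdv, hcl⟩ := colStep_horiz hc hv
    exact hFeq (Subtype.ext (by rw [eu, ev, hpc, hh]))

lemma shape_A (C : Ctx f n Γ) {u v : ↥Γ.verts} {h : Γ.coe.Adj u v}
    {hc : colStep (2 ^ 2 ^ (2 * pc u)) u.val.val.2 v.val.val.2} {e : Sym2 (YTVert f)}
    (hB : ¬ f (pc u) ≤ f n) (hA : pc u < n) (he : e ∈ (fwd C u v h hc).edges) :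
    (ht v = ht u + 1 ∧ cl u = cl v ∧ ∃ r, r < 2 ^ 2 ^ (2 * pc u) ∧ e.map Subtype.val =
      s((pc u, cl u, ht u * 2 ^ 2 ^ (2 * pc u) + r),
        (pc u, cl u, ht u * 2 ^ 2 ^ (2 * pc u) + r + 1))) ∨
    (ht u = ht v ∧ cl v = cl u + 1 ∧ e.map Subtype.val =
      s((pc u, cl u, ht u * 2 ^ 2 ^ (2 * pc u)),
        (pc u, cl u + 1, ht u * 2 ^ 2 ^ (2 * pc u)))) := by
  have hpc := adj_pc h
  have hBv : ¬ f (pc v) ≤ f n := by rwa [← hpc]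
  have hAv : pc v < n := by rwa [← hpc]
  have eu : (F C u).val = (pc u, cl u, ht u * 2 ^ 2 ^ (2 * pc u)) := F_val_A C hB hA
  have ev : (F C v).val = (pc v, cl v, ht v * 2 ^ 2 ^ (2 * pc v)) := F_val_A C hBv hAv
  unfold fwd at he
  split_ifs at he with hv hFeq
  · left
    erw [Walk.edges_copy] at he
    obtain ⟨r, hr, hmap⟩ := vwalk_edges f _ _ _ _ _ _ _ e he
    have hcl := colStep_vert hc hv
    have hl : (F C v).val.2.2 - (F C u).val.2.2 = 2 ^ 2 ^ (2 * pc u) := by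
      rw [eu, ev]
      show ht v * 2 ^ 2 ^ (2 * pc v) - ht u * 2 ^ 2 ^ (2 * pc u) = 2 ^ 2 ^ (2 * pc u)
      rw [← hpc, hv, Nat.succ_mul, Nat.add_sub_cancel_left]
    rw [hl] at hr
    refine ⟨hv, hcl, r, hr, ?_⟩
    rw [hmap, eu]
    try rfl
  · simp only [Walk.edges_copy, Walk.edges_nil] at he
    exact absurd he List.not_mem_nil
  · right
    obtain ⟨hh, hdv, hcl⟩ := colStep_horiz hc hv
    simp only [Walk.edges_cons, Walk.edges_nil, List.mem_singleton] at he
    refine ⟨hh, hcl, ?_⟩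
    rw [he]
    refine (Sym2.map_pair_eq _ _ _).trans ?_
    rw [eu, ev, ← hpc, ← hh, hcl]

lemma shape_C (C : Ctx f n Γ) {u v : ↥Γ.verts} {h : Γ.coe.Adj u v}
    {hc : colStep (2 ^ 2 ^ (2 * pc u)) u.val.val.2 v.val.val.2} {e : Sym2 (YTVert f)}
    (hB : ¬ f (pc u) ≤ f n) (hA : ¬ pc u < n) (he : e ∈ (fwd C u v h hc).edges) :
    (ht v = ht u + 1 ∧ cl u = cl v ∧ e.map Subtype.val =
      s((tg f n (f (pc u)) (n + 1 + enc Γ (cmp u)), cl u,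
          ht u + 2 ^ 2 ^ (2 * tg f n (f (pc u)) (n + 1 + enc Γ (cmp u)) + 1) - hgt (cmp u)),
        (tg f n (f (pc u)) (n + 1 + enc Γ (cmp u)), cl u,
          (ht u + 2 ^ 2 ^ (2 * tg f n (f (pc u)) (n + 1 + enc Γ (cmp u)) + 1) - hgt (cmp u))
            + 1))) ∨
    (ht u = ht v ∧ cl v = cl u + 1 ∧ ht u = hgt (cmp u) ∧ e.map Subtype.val =
      s((tg f n (f (pc u)) (n + 1 + enc Γ (cmp u)), cl u,
          2 ^ 2 ^ (2 * tg f n (f (pc u)) (n + 1 + enc Γ (cmp u)) + 1)),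
        (tg f n (f (pc u)) (n + 1 + enc Γ (cmp u)), cl u + 1,
          2 ^ 2 ^ (2 * tg f n (f (pc u)) (n + 1 + enc Γ (cmp u)) + 1)))) := by
  have hpc := adj_pc h
  have hcm := adj_cmp h
  have hBv : ¬ f (pc v) ≤ f n := by rwa [← hpc]
  have hAv : ¬ pc v < n := by rwa [← hpc]
  have eu := F_val_C C hB hA
  have ev := F_val_C C hBv hAv
  have hbd := caseC_hgt_bound C hB hA
  unfold fwd at he
  split_ifs at he with hv hFeq
  · left
    erw [Walk.edges_copy] at he
    obtain ⟨r, hr, hmap⟩ := vwalk_edges f _ _ _ _ _ _ _ e he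
    have hcl := colStep_vert hc hv
    have hl : (F C v).val.2.2 - (F C u).val.2.2 = 1 := by
      rw [eu, ev, ← hpc, ← hcm]
      show (ht v + 2 ^ 2 ^ (2 * tg f n (f (pc u)) (n + 1 + enc Γ (cmp u)) + 1) - hgt (cmp u))
        - (ht u + 2 ^ 2 ^ (2 * tg f n (f (pc u)) (n + 1 + enc Γ (cmp u)) + 1) - hgt (cmp u)) = 1
      have := sub_helper (T := 2 ^ 2 ^ (2 * tg f n (f (pc u)) (n + 1 + enc Γ (cmp u)) + 1))
        (g := hgt (cmp u)) hv (by omega)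
      omega
    rw [hl] at hr
    have hr0 : r = 0 := by omega
    subst hr0
    refine ⟨hv, hcl, ?_⟩
    rw [hmap, eu]
    try rfl
  · simp only [Walk.edges_copy, Walk.edges_nil] at he
    exact absurd he List.not_mem_nil
  · right
    obtain ⟨hh, hdv, hcl⟩ := colStep_horiz hc hv
    have hHH : ht u ∈ HH (cmp u) := ⟨u, v, h, rfl, rfl, hh.symm⟩
    have hmc : ∀ x : ↥Γ.verts, cmp x = cmp u → pc x = pc u := fun x hx => cmp_pc hx
    have hsp := caseC_sp C hB (vert_bound u).1 hA
    have hhg : ht u = hgt (cmp u) := HH_unique C hmc hsp _ hHH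
    simp only [Walk.edges_cons, Walk.edges_nil, List.mem_singleton] at he
    refine ⟨hh, hcl, hhg, ?_⟩
    rw [he]
    refine (Sym2.map_pair_eq _ _ _).trans ?_
    rw [eu, ev, ← hpc, ← hcm, ← hh]
    have heq : ht u + 2 ^ 2 ^ (2 * tg f n (f (pc u)) (n + 1 + enc Γ (cmp u)) + 1)
        - hgt (cmp u) = 2 ^ 2 ^ (2 * tg f n (f (pc u)) (n + 1 + enc Γ (cmp u)) + 1) := by
      rw [hhg, Nat.add_sub_cancel_left]
    rw [heq, hcl]

end S4
namespace S4

open SimpleGraph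

attribute [local instance] Classical.propDecidable

variable {f : ℕ → ℕ} {n : ℕ} {Γ : (Xtotal f).Subgraph}

lemma mk_eq {x1 y1 z1 x2 y2 z2 : ℕ} (h : ((x1, y1, z1) : ℕ × ℕ × ℕ) = (x2, y2, z2)) :
    x1 = x2 ∧ y1 = y2 ∧ z1 = z2 := by
  rw [Prod.mk.injEq, Prod.mk.injEq] at h
  exact ⟨h.1, h.2.1, h.2.2⟩

lemma mulrow {s a b r r' : ℕ} (hr : r < s) (hr' : r' < s) (h : a * s + r = b * s + r') :
    a = b ∧ r = r' := by
  have hs : 0 < s := by omega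
  have e1 : (a * s + r) / s = a := by
    rw [Nat.mul_comm, Nat.mul_add_div hs, Nat.div_eq_of_lt hr, Nat.add_zero]
  have e2 : (b * s + r') / s = b := by
    rw [Nat.mul_comm, Nat.mul_add_div hs, Nat.div_eq_of_lt hr', Nat.add_zero]
  have hab : a = b := by rw [← e1, ← e2, h]
  subst hab
  exact ⟨rfl, by omega⟩

lemma YtoHt {a a' T g : ℕ} (h : a + T - g = a' + T - g) (h1 : g < a + T) (h2 : g < a' + T) :
    a = a' := by omega

lemma absurd_cross {x y : ℕ} (h1 : x = y + 1) (h2 : x + 1 = y) : False := by omega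

/-- The set of (canonically oriented) adjacent pairs whose forward walk uses `e`. -/
def OP (C : Ctx f n Γ) (e : Sym2 (YTVert f)) : Set (↥Γ.verts × ↥Γ.verts) :=
  {p | ∃ (h : Γ.coe.Adj p.1 p.2)
    (hc : colStep (2 ^ 2 ^ (2 * pc p.1)) p.1.val.val.2 p.2.val.val.2),
    e ∈ (fwd C p.1 p.2 h hc).edges}

lemma fwd_epiece (C : Ctx f n Γ) {u v : ↥Γ.verts} {h : Γ.coe.Adj u v}
    {hc : colStep (2 ^ 2 ^ (2 * pc u)) u.val.val.2 v.val.val.2} {e : Sym2 (YTVert f)}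
    (he : e ∈ (fwd C u v h hc).edges) :
    ∃ t1 t2 : ℕ × ℕ × ℕ, e.map Subtype.val = s(t1, t2) ∧ t1.1 = (F C u).val.1 ∧
      t2.1 = (F C u).val.1 := by
  by_cases hB : f (pc u) ≤ f n
  · obtain ⟨_, _, hmap⟩ := shape_B C hB he
    exact ⟨_, _, hmap, by rw [F_val_B C hB], by rw [F_val_B C hB]⟩
  · by_cases hA : pc u < n
    · rcases shape_A C hB hA he with ⟨_, _, r, _, hmap⟩ | ⟨_, _, hmap⟩ <;>
        exact ⟨_, _, hmap, by rw [F_val_A C hB hA], by rw [F_val_A C hB hA]⟩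
    · rcases shape_C C hB hA he with ⟨_, _, hmap⟩ | ⟨_, _, _, hmap⟩ <;>
        exact ⟨_, _, hmap, by rw [F_val_C C hB hA], by rw [F_val_C C hB hA]⟩

lemma OP_TP (C : Ctx f n Γ) {e : Sym2 (YTVert f)} {p p' : ↥Γ.verts × ↥Γ.verts}
    (hp : p ∈ OP C e) (hp' : p' ∈ OP C e) :
    (F C p.1).val.1 = (F C p'.1).val.1 := by
  obtain ⟨h, hc, he⟩ := hp
  obtain ⟨h', hc', he'⟩ := hp'
  obtain ⟨t1, t2, hmap, ht1, ht2⟩ := fwd_epiece C he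
  obtain ⟨s1, s2, hmap', hs1, hs2⟩ := fwd_epiece C he'
  have heq : s(t1, t2) = s(s1, s2) := hmap.symm.trans hmap'
  rw [Sym2.eq_iff] at heq
  rcases heq with ⟨h1, _⟩ | ⟨h1, _⟩
  · rw [← ht1, ← hs1, h1]
  · rw [← ht1, ← hs2, h1]

/-- Main uniqueness lemma for congestion: two canonically-oriented pairs whose
forward walks share an edge agree, provided (in case B) they use the same column. -/
lemma OP_unique (C : Ctx f n Γ) {e : Sym2 (YTVert f)} {p p' : ↥Γ.verts × ↥Γ.verts}
    (hp : p ∈ OP C e) (hp' : p' ∈ OP C e)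
    (hsame : cl p.1 = cl p'.1 ∨ ¬ f (pc p.1) ≤ f n) : p = p' := by
  have hTP := OP_TP C hp hp'
  obtain ⟨u, v⟩ := p
  obtain ⟨u', v'⟩ := p'
  simp only [] at hTP hsame
  obtain ⟨h, hc, he⟩ := hp
  obtain ⟨h', hc', he'⟩ := hp'
  simp only [] at h hc he h' hc' he'
  rcases TP_eq C hTP with ⟨hB, hB', hpc⟩ | ⟨hB, hB', hA, hA', hpc⟩ |
    ⟨hB, hB', hA, hA', hpc, hcm⟩
  · -- case B
    have hcl : cl u = cl u' := hsame.resolve_right (by simpa using hB)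
    obtain ⟨hv, hclv, hmap⟩ := shape_B C hB he
    obtain ⟨hv', hclv', hmap'⟩ := shape_B C hB' he'
    rw [← hpc] at hmap'
    have hs := hmap.symm.trans hmap'
    rw [Sym2.eq_iff] at hs
    rcases hs with ⟨h1, h2⟩ | ⟨h1, h2⟩
    · obtain ⟨-, -, e3⟩ := mk_eq h1
      have hu : u = u' := vert_ext hpc hcl e3
      have hvv : v = v' := vert_ext (by rw [← adj_pc h, ← adj_pc h', hpc])
        (by rw [← hclv, ← hclv', hcl]) (by omega)
      rw [hu, hvv]
    · obtain ⟨-, -, e3⟩ := mk_eq h1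
      obtain ⟨-, -, e4⟩ := mk_eq h2
      exact (absurd_cross e3 e4).elim
  · -- case A
    rcases shape_A C hB hA he with ⟨hv, hclv, r, hr, hmap⟩ | ⟨hh, hclh, hmap⟩ <;>
      rcases shape_A C hB' hA' he' with ⟨hv', hclv', r', hr', hmap'⟩ | ⟨hh', hclh', hmap'⟩ <;>
      rw [← hpc] at hmap' <;>
      have hs := hmap.symm.trans hmap' <;>
      rw [Sym2.eq_iff] at hs
    · -- vertical / vertical
      rw [← hpc] at hr'
      rcases hs with ⟨h1, h2⟩ | ⟨h1, h2⟩
      · obtain ⟨-, e2, e3⟩ := mk_eq h1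
        obtain ⟨hht, hrr⟩ := mulrow hr hr' e3
        have hu : u = u' := vert_ext hpc e2 hht
        have hvv : v = v' := vert_ext (by rw [← adj_pc h, ← adj_pc h', hpc])
          (by rw [← hclv, ← hclv', e2]) (by omega)
        rw [hu, hvv]
      · obtain ⟨-, -, e3⟩ := mk_eq h1
        obtain ⟨-, -, e4⟩ := mk_eq h2
        exact (absurd_cross e3 e4).elim
    · -- vertical / horizontal : contradiction on columns
      rcases hs with ⟨h1, h2⟩ | ⟨h1, h2⟩ <;>
        · obtain ⟨-, e2, -⟩ := mk_eq h1
          obtain ⟨-, e2', -⟩ := mk_eq h2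
          omega
    · -- horizontal / vertical : contradiction on columns
      rcases hs with ⟨h1, h2⟩ | ⟨h1, h2⟩ <;>
        · obtain ⟨-, e2, -⟩ := mk_eq h1
          obtain ⟨-, e2', -⟩ := mk_eq h2
          omega
    · -- horizontal / horizontal
      rcases hs with ⟨h1, h2⟩ | ⟨h1, h2⟩
      · obtain ⟨-, e2, e3⟩ := mk_eq h1
        have hht : ht u = ht u' :=
          Nat.eq_of_mul_eq_mul_right (Nat.pow_pos (by norm_num)) e3
        have hu : u = u' := vert_ext hpc e2 hht
        have hvv : v = v' := vert_ext (by rw [← adj_pc h, ← adj_pc h', hpc])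
          (by rw [hclh, hclh', e2]) (by omega)
        rw [hu, hvv]
      · obtain ⟨-, e2, -⟩ := mk_eq h1
        obtain ⟨-, e2', -⟩ := mk_eq h2
        omega
  · -- case C
    have hQ : tg f n (f (pc u')) (n + 1 + enc Γ (cmp u')) =
        tg f n (f (pc u)) (n + 1 + enc Γ (cmp u)) := by rw [hpc, hcm]
    have hgg : hgt (cmp u') = hgt (cmp u) := by rw [hcm]
    have hbd := caseC_hgt_bound C hB hA
    have hbd' := caseC_hgt_bound C hB' hA'
    rw [hQ, hgg] at hbd'
    rcases shape_C C hB hA he with ⟨hv, hclv, hmap⟩ | ⟨hh, hclh, hhg, hmap⟩ <;>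
      rcases shape_C C hB' hA' he' with ⟨hv', hclv', hmap'⟩ | ⟨hh', hclh', hhg', hmap'⟩
    · -- vertical / vertical
      rw [hQ, hgg] at hmap'
      have hs := hmap.symm.trans hmap'
      rw [Sym2.eq_iff] at hs
      rcases hs with ⟨h1, h2⟩ | ⟨h1, h2⟩
      · obtain ⟨-, e2, e3⟩ := mk_eq h1
        have hht : ht u = ht u' := YtoHt e3 hbd.1 hbd'.1
        have hu : u = u' := vert_ext hpc e2 hht
        have hvv : v = v' := vert_ext (by rw [← adj_pc h, ← adj_pc h', hpc])
          (by rw [← hclv, ← hclv', e2]) (by omega)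
        rw [hu, hvv]
      · obtain ⟨-, -, e3⟩ := mk_eq h1
        obtain ⟨-, -, e4⟩ := mk_eq h2
        exact (absurd_cross e3 e4).elim
    · -- vertical / horizontal
      rw [hQ] at hmap'
      have hs := hmap.symm.trans hmap'
      rw [Sym2.eq_iff] at hs
      rcases hs with ⟨h1, h2⟩ | ⟨h1, h2⟩ <;>
        · obtain ⟨-, e2, -⟩ := mk_eq h1
          obtain ⟨-, e2', -⟩ := mk_eq h2
          omega
    · -- horizontal / vertical
      rw [hQ, hgg] at hmap'
      have hs := hmap.symm.trans hmap'
      rw [Sym2.eq_iff] at hs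
      rcases hs with ⟨h1, h2⟩ | ⟨h1, h2⟩ <;>
        · obtain ⟨-, e2, -⟩ := mk_eq h1
          obtain ⟨-, e2', -⟩ := mk_eq h2
          omega
    · -- horizontal / horizontal
      rw [hQ] at hmap'
      have hs := hmap.symm.trans hmap'
      rw [Sym2.eq_iff] at hs
      rcases hs with ⟨h1, h2⟩ | ⟨h1, h2⟩
      · obtain ⟨-, e2, -⟩ := mk_eq h1
        have hht : ht u = ht u' := by rw [hhg, hhg', hcm]
        have hu : u = u' := vert_ext hpc e2 hht
        have hvv : v = v' := vert_ext (by rw [← adj_pc h, ← adj_pc h', hpc])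
          (by rw [hclh, hclh', e2]) (by omega)
        rw [hu, hvv]
      · obtain ⟨-, e2, -⟩ := mk_eq h1
        obtain ⟨-, e2', -⟩ := mk_eq h2
        omega

end S4
namespace S4

open SimpleGraph

attribute [local instance] Classical.propDecidable

variable {f : ℕ → ℕ} {n : ℕ} {Γ : (Xtotal f).Subgraph}

lemma Iio_ncard (k : ℕ) : (Set.Iio k).ncard = k := by
  rw [← Finset.coe_range, Set.ncard_coe_finset, Finset.card_range]

lemma OP_card (C : Ctx f n Γ) (e : Sym2 (YTVert f)) : (OP C e).ncard ≤ f n := by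
  haveI := C.hfin.to_subtype
  rcases Set.eq_empty_or_nonempty (OP C e) with h0 | ⟨p₀, hp₀⟩
  · rw [h0, Set.ncard_empty]; omega
  by_cases hB : f (pc p₀.1) ≤ f n
  · have hmaps : ∀ p ∈ OP C e, (fun p : ↥Γ.verts × ↥Γ.verts => cl p.1) p ∈ Set.Iio (f n) := by
      intro p hp
      rcases TP_eq C (OP_TP C hp hp₀) with ⟨h1, _, _⟩ | ⟨_, h2, _⟩ | ⟨_, h2, _, _⟩
      · exact lt_of_lt_of_le (vert_bound p.1).2.1 h1
      · exact absurd hB h2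
      · exact absurd hB h2
    have hinj : Set.InjOn (fun p : ↥Γ.verts × ↥Γ.verts => cl p.1) (OP C e) := by
      intro p hp p' hp' hcl
      exact OP_unique C hp hp' (Or.inl hcl)
    have hle := Set.ncard_le_ncard_of_injOn _ hmaps hinj (Set.finite_Iio _)
    rwa [Iio_ncard] at hle
  · have hsub : OP C e ⊆ {p₀} := by
      intro p hp
      have hBp : ¬ f (pc p.1) ≤ f n := by
        rcases TP_eq C (OP_TP C hp hp₀) with ⟨_, h2, _⟩ | ⟨h1, _, _⟩ | ⟨h1, _, _⟩
        · exact absurd h2 hB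
        · exact h1
        · exact h1
      have := OP_unique C hp hp₀ (Or.inr hBp)
      rw [this]; rfl
    have hle := Set.ncard_le_ncard hsub (Set.finite_singleton _)
    rw [Set.ncard_singleton] at hle
    have := C.hn; omega

lemma cong_bound (C : Ctx f n Γ) (e : Sym2 (YTVert f)) :
    {p : ↥Γ.verts × ↥Γ.verts |
      ∃ h : Γ.coe.Adj p.1 p.2, e ∈ (wk C p.1 p.2 h).edges}.ncard ≤ 2 * f n := by
  haveI := C.hfin.to_subtype
  have hsub : {p : ↥Γ.verts × ↥Γ.verts | ∃ h : Γ.coe.Adj p.1 p.2, e ∈ (wk C p.1 p.2 h).edges}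
      ⊆ OP C e ∪ Prod.swap '' OP C e := by
    rintro ⟨u, v⟩ ⟨h, he⟩
    unfold wk at he
    split_ifs at he with hc
    · exact Or.inl ⟨h, hc, he⟩
    · rw [Walk.edges_reverse, List.mem_reverse] at he
      exact Or.inr ⟨(v, u), ⟨Γ.coe.adj_symm h, _, he⟩, rfl⟩
  calc {p : ↥Γ.verts × ↥Γ.verts | ∃ h : Γ.coe.Adj p.1 p.2, e ∈ (wk C p.1 p.2 h).edges}.ncard
      ≤ (OP C e ∪ Prod.swap '' OP C e).ncard := Set.ncard_le_ncard hsub (Set.toFinite _)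
    _ ≤ (OP C e).ncard + (Prod.swap '' OP C e).ncard := Set.ncard_union_le _ _
    _ ≤ (OP C e).ncard + (OP C e).ncard := by
        have := Set.ncard_image_le (s := OP C e) (f := Prod.swap) (Set.toFinite _)
        omega
    _ ≤ 2 * f n := by have := OP_card C e; omega

/-- Injectivity of the vertex map (up to columns in case B). -/
lemma F_inj (C : Ctx f n Γ) {v v' : ↥Γ.verts} (hFF : F C v = F C v')
    (hside : cl v = cl v' ∨ ¬ f (pc v) ≤ f n) : v = v' := by
  have hTP : (F C v).val.1 = (F C v').val.1 := by rw [hFF]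
  have hval : (F C v).val = (F C v').val := by rw [hFF]
  rcases TP_eq C hTP with ⟨hB, hB', hpc⟩ | ⟨hB, hB', hA, hA', hpc⟩ |
    ⟨hB, hB', hA, hA', hpc, hcm⟩
  · have hcl := hside.resolve_right (by simpa using hB)
    rw [F_val_B C hB, F_val_B C hB'] at hval
    obtain ⟨-, -, e3⟩ := mk_eq hval
    exact vert_ext hpc hcl e3
  · rw [F_val_A C hB hA, F_val_A C hB' hA'] at hval
    obtain ⟨-, e2, e3⟩ := mk_eq hval
    rw [← hpc] at e3
    exact vert_ext hpc e2 (Nat.eq_of_mul_eq_mul_right (Nat.pow_pos (by norm_num)) e3)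
  · rw [F_val_C C hB hA, F_val_C C hB' hA'] at hval
    obtain ⟨-, e2, e3⟩ := mk_eq hval
    have hbd := caseC_hgt_bound C hB hA
    have hbd' := caseC_hgt_bound C hB' hA'
    rw [← hpc, ← hcm] at e3 hbd'
    exact vert_ext hpc e2 (YtoHt e3 hbd.1 hbd'.1)

lemma preim_card (C : Ctx f n Γ) (w : YTVert f) :
    {v : ↥Γ.verts | F C v = w}.ncard ≤ f n := by
  haveI := C.hfin.to_subtype
  rcases Set.eq_empty_or_nonempty {v : ↥Γ.verts | F C v = w} with h0 | ⟨v₀, hv₀⟩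
  · rw [h0, Set.ncard_empty]; omega
  by_cases hB : f (pc v₀) ≤ f n
  · have hmaps : ∀ v ∈ {v : ↥Γ.verts | F C v = w}, cl v ∈ Set.Iio (f n) := by
      intro v hv
      have hTP : (F C v).val.1 = (F C v₀).val.1 := by
        rw [(hv : F C v = w), (hv₀ : F C v₀ = w)]
      rcases TP_eq C hTP with ⟨h1, _, _⟩ | ⟨_, h2, _⟩ | ⟨_, h2, _, _⟩
      · exact lt_of_lt_of_le (vert_bound v).2.1 h1
      · exact absurd hB h2
      · exact absurd hB h2
    have hinj : Set.InjOn (fun v : ↥Γ.verts => cl v) {v : ↥Γ.verts | F C v = w} := by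
      intro v hv v' hv' hcl
      exact F_inj C ((hv : F C v = w).trans (hv' : F C v' = w).symm) (Or.inl hcl)
    have hle := Set.ncard_le_ncard_of_injOn _ hmaps hinj (Set.finite_Iio _)
    rwa [Iio_ncard] at hle
  · have hsub : {v : ↥Γ.verts | F C v = w} ⊆ {v₀} := by
      intro v hv
      have hTP : (F C v).val.1 = (F C v₀).val.1 := by
        rw [(hv : F C v = w), (hv₀ : F C v₀ = w)]
      have hBv : ¬ f (pc v) ≤ f n := by
        rcases TP_eq C hTP with ⟨_, h2, _⟩ | ⟨h1, _, _⟩ | ⟨h1, _, _⟩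
        · exact absurd h2 hB
        · exact h1
        · exact h1
      have := F_inj C ((hv : F C v = w).trans (hv₀ : F C v₀ = w).symm) (Or.inr hBv)
      rw [this]; rfl
    have hle := Set.ncard_le_ncard hsub (Set.finite_singleton _)
    rw [Set.ncard_singleton] at hle
    have := C.hn; omega

/-! ### Supports of the walks -/

lemma vert_l1 (C : Ctx f n Γ) {u v : ↥Γ.verts} (h : Γ.coe.Adj u v) (hv : ht v = ht u + 1)
    (hcl : cl u = cl v) (hflag : f (pc u) ≤ f n ∨ ¬ pc u < n) :
    (F C v).val.2.2 = (F C u).val.2.2 + 1 := by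
  have hpc := adj_pc h
  have hcm := adj_cmp h
  rcases hflag with hB | hA
  · have hBv : f (pc v) ≤ f n := by rwa [← hpc]
    rw [F_val_B C hB, F_val_B C hBv]
    exact hv
  · by_cases hB : f (pc u) ≤ f n
    · have hBv : f (pc v) ≤ f n := by rwa [← hpc]
      rw [F_val_B C hB, F_val_B C hBv]
      exact hv
    · have hBv : ¬ f (pc v) ≤ f n := by rwa [← hpc]
      have hAv : ¬ pc v < n := by rwa [← hpc]
      have hbd := caseC_hgt_bound C hB hA
      rw [F_val_C C hB hA, F_val_C C hBv hAv, ← hpc, ← hcm]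
      exact sub_helper hv hbd.1

lemma fwd_support (C : Ctx f n Γ) {u v : ↥Γ.verts} {h : Γ.coe.Adj u v}
    {hc : colStep (2 ^ 2 ^ (2 * pc u)) u.val.val.2 v.val.val.2} {x : YTVert f}
    (hx : x ∈ (fwd C u v h hc).support) :
    x = F C u ∨ x = F C v ∨ (x.val.1 = pc u ∧ 1 ≤ pc u ∧ pc u < n) := by
  unfold fwd at hx
  split_ifs at hx with hv hFeq
  · erw [Walk.support_copy] at hx
    obtain ⟨r, hr, hval⟩ := vwalk_support f _ _ _ _ _ _ _ x hx
    by_cases hB : f (pc u) ≤ f n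
    · have hl := vert_l1 C h hv (colStep_vert hc hv) (Or.inl hB)
      rw [hl] at hr
      simp only [Nat.add_sub_cancel_left] at hr
      interval_cases r
      · exact Or.inl (Subtype.ext (by rw [hval]; rfl))
      · refine Or.inr (Or.inl (Subtype.ext ?_))
        rw [hval]
        have d := vertD C h hv (colStep_vert hc hv)
        exact prod3_ext d.1 d.2.1 hl.symm
    · by_cases hA : pc u < n
      · refine Or.inr (Or.inr ⟨?_, (vert_bound u).1, hA⟩)
        have : x.val.1 = (F C u).val.1 := by rw [hval]
        rw [this, F_val_A C hB hA]
      · have hl := vert_l1 C h hv (colStep_vert hc hv) (Or.inr hA)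
        rw [hl] at hr
        simp only [Nat.add_sub_cancel_left] at hr
        interval_cases r
        · exact Or.inl (Subtype.ext (by rw [hval]; rfl))
        · refine Or.inr (Or.inl (Subtype.ext ?_))
          rw [hval]
          have d := vertD C h hv (colStep_vert hc hv)
          exact prod3_ext d.1 d.2.1 hl.symm
  · rw [Walk.support_copy, Walk.support_nil] at hx
    simp only [List.mem_singleton] at hx
    exact Or.inl hx
  · simp only [Walk.support_cons, Walk.support_nil, List.mem_cons,
      List.mem_singleton, List.not_mem_nil, or_false] at hx
    rcases hx with hx | hx
    · exact Or.inl hx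
    · exact Or.inr (Or.inl hx)

end S4
namespace S4

open SimpleGraph

attribute [local instance] Classical.propDecidable

variable {f : ℕ → ℕ} {n : ℕ} {Γ : (Xtotal f).Subgraph}

lemma vol_bound (C : Ctx f n Γ) :
    (Set.range (F C) ∪ {w : YTVert f | ∃ (u v : ↥Γ.verts) (h : Γ.coe.Adj u v),
      w ∈ (wk C u v h).support}).ncard ≤ 2 * ((2 ^ 2 ^ (2 * n) * f n + 1) * f n) := by
  haveI := C.hfin.to_subtype
  set Slice : Set (YTVert f) := {x : YTVert f | 1 ≤ x.val.1 ∧ x.val.1 < n} with hSl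
  set SFin : Finset (ℕ × ℕ × ℕ) := (Finset.Ico 1 n).biUnion
    (fun m => {m} ×ˢ (Finset.range (f m) ×ˢ
      Finset.range (2 ^ 2 ^ (2 * m + 1) * f m + 1))) with hSF
  have hSliceSub : ∀ x ∈ Slice, x.val ∈ SFin := by
    intro x hx
    simp only [hSF, Finset.mem_biUnion, Finset.mem_Ico, Finset.mem_product,
      Finset.mem_singleton, Finset.mem_range]
    refine ⟨x.val.1, ⟨hx.1, hx.2⟩, rfl, x.prop.2.1, ?_⟩
    have := x.prop.2.2; omega
  have hSliceFin : Slice.Finite := by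
    refine Set.Finite.subset (Set.Finite.preimage ?_ SFin.finite_toSet)
      (fun x hx => hSliceSub x hx)
    exact Subtype.coe_injective.injOn
  have h1 : Slice.ncard ≤ SFin.card := by
    have hh := Set.ncard_le_ncard_of_injOn (Subtype.val)
      (fun x hx => by simpa using hSliceSub x hx)
      (Subtype.coe_injective.injOn) (SFin.finite_toSet)
    rwa [Set.ncard_coe_finset] at hh
  have h2 : SFin.card ≤ (Finset.Ico 1 n).sum
      (fun m => f m * (2 ^ 2 ^ (2 * m + 1) * f m + 1)) := by
    refine le_trans (Finset.card_biUnion_le) (Finset.sum_le_sum ?_)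
    intro m hm
    rw [Finset.card_product, Finset.card_product, Finset.card_singleton,
      Finset.card_range, Finset.card_range]
    exact le_of_eq (one_mul _)
  have hsum : (Finset.Ico 1 n).sum (fun m => f m * (2 ^ 2 ^ (2 * m + 1) * f m + 1))
      ≤ (2 ^ 2 ^ (2 * n) * f n + 1) * f n := by
    by_cases hn2 : 2 ≤ n
    · exact L4 C.hf1 C.hfle hn2 C.hn
    · rw [Finset.Ico_eq_empty (by omega), Finset.sum_empty]
      omega
  have hrange : (Set.range (F C)).ncard ≤ (2 ^ 2 ^ (2 * n) * f n + 1) * f n := by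
    rw [← Set.image_univ]
    refine le_trans (Set.ncard_image_le Set.finite_univ) ?_
    rw [Set.ncard_univ, Nat.card_coe_set_eq]
    exact C.hcard
  have hsub : (Set.range (F C) ∪ {w : YTVert f | ∃ (u v : ↥Γ.verts) (h : Γ.coe.Adj u v),
      w ∈ (wk C u v h).support}) ⊆ Set.range (F C) ∪ Slice := by
    rintro x (hx | hx)
    · exact Or.inl hx
    · obtain ⟨u, v, h, hs⟩ := hx
      unfold wk at hs
      have main : ∀ (a b : ↥Γ.verts) (hab : Γ.coe.Adj a b)
          (hcab : colStep (2 ^ 2 ^ (2 * pc a)) a.val.val.2 b.val.val.2),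
          x ∈ (fwd C a b hab hcab).support → x ∈ Set.range (F C) ∪ Slice := by
        intro a b hab hcab hxs
        rcases fwd_support C hxs with h1 | h1 | h1
        · exact Or.inl ⟨a, h1.symm⟩
        · exact Or.inl ⟨b, h1.symm⟩
        · exact Or.inr ⟨by omega, by omega⟩
      split_ifs at hs with hc
      · exact main u v h hc hs
      · rw [Walk.support_reverse, List.mem_reverse] at hs
        exact main v u (Γ.coe.adj_symm h) _ hs
  calc (Set.range (F C) ∪ {w : YTVert f | ∃ (u v : ↥Γ.verts) (h : Γ.coe.Adj u v),
      w ∈ (wk C u v h).support}).ncard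
      ≤ (Set.range (F C) ∪ Slice).ncard :=
        Set.ncard_le_ncard hsub ((Set.finite_range _).union hSliceFin)
    _ ≤ (Set.range (F C)).ncard + Slice.ncard := Set.ncard_union_le _ _
    _ ≤ 2 * ((2 ^ 2 ^ (2 * n) * f n + 1) * f n) := by omega

end S4

open S4 in
/-- For `f n ≥ 2`, every finite subgraph of `X` with at most
`N = (2^(2^(2n))·f n + 1)·f n` vertices admits a coarse `f n`-wiring into `Y` with
volume at most `2N`; consequently `wir^{f n}_{X→Y}(N) ≤ 2N`. -/
theorem statement4
    (f : ℕ → ℕ)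
    (hsurj : ∀ k, 1 ≤ k → ∃ n, 1 ≤ n ∧ f n = k)
    (hf1 : f 1 = 1)
    (hf : ∀ n, 2 ≤ n → 2 ≤ f n ∧ f n ≤ n)
    (hinf : ∀ k, 2 ≤ k → {n | f n = k}.Infinite)
    (n : ℕ) (hn : 2 ≤ f n) :
    (∀ Γ : (Xtotal f).Subgraph, Γ.verts.Finite →
        Γ.verts.ncard ≤ (2 ^ 2 ^ (2 * n) * f n + 1) * f n →
        ∃ Wr : Wiring Γ.coe (Ytotal f), Wr.IsCoarse (f n) ∧
          Wr.volume ≤ 2 * ((2 ^ 2 ^ (2 * n) * f n + 1) * f n)) ∧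
      wirProfile (Xtotal f) (Ytotal f) (f n) ((2 ^ 2 ^ (2 * n) * f n + 1) * f n) ≤
        ((2 * ((2 ^ 2 ^ (2 * n) * f n + 1) * f n) : ℕ) : ℕ∞) := by
  have main : ∀ Γ : (Xtotal f).Subgraph, Γ.verts.Finite →
      Γ.verts.ncard ≤ (2 ^ 2 ^ (2 * n) * f n + 1) * f n →
      ∃ Wr : Wiring Γ.coe (Ytotal f), Wr.IsCoarse (f n) ∧
        Wr.volume ≤ 2 * ((2 ^ 2 ^ (2 * n) * f n + 1) * f n) := by
    intro Γ hfin hcard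
    have C : Ctx f n Γ := ⟨hf1, hf, hinf, hn, hfin, hcard⟩
    refine ⟨⟨F C, wk C, wk_symm C⟩, ⟨fun w => preim_card C w, fun e _ => cong_bound C e⟩, ?_⟩
    exact vol_bound C
  refine ⟨main, ?_⟩
  apply sSup_le
  rintro x ⟨Γ, hfin, hcard, rfl⟩
  obtain ⟨Wr, hco, hvol⟩ := main Γ hfin hcard
  calc wir (f n) Γ.coe (Ytotal f) ≤ (Wr.volume : ℕ∞) := sInf_le ⟨Wr, hco, rfl⟩
    _ ≤ ((2 * ((2 ^ 2 ^ (2 * n) * f n + 1) * f n) : ℕ) : ℕ∞) := by exact_mod_cast hvol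
end

section
/- For every n with f(n) ≥ 2, if g is a coarse (f(n)−1)-wiring of X_n into Y, then the image of g is contained in a single connected component Y_m of Y with m ≥ n. -/
open SimpleGraph

-- auxiliary lemmas to insert above statement7
section StatementSevenAux

variable {f : ℕ → ℕ} {n : ℕ}

lemma ytotal_walk_fst {a b : YTVert f} (p : (Ytotal f).Walk a b) : a.val.1 = b.val.1 := by
  induction p with
  | nil => rfl
  | cons h _ ih => exact (And.left (And.right h)).trans ih

lemma ytotal_support_fst {a b : YTVert f} (p : (Ytotal f).Walk a b) :
    ∀ w ∈ p.support, w.val.1 = a.val.1 := by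
  induction p with
  | nil =>
    intro w hw
    rw [SimpleGraph.Walk.support_nil, List.mem_singleton] at hw
    rw [hw]
  | cons h _ ih =>
    intro w hw
    rw [SimpleGraph.Walk.support_cons, List.mem_cons] at hw
    rcases hw with rfl | hw
    · rfl
    · exact (ih w hw).trans (And.left (And.right h)).symm

lemma x_reach_zero (hn0 : 0 < f n) (v : XVert f n) :
    (Xgraph f n).Reachable v ⟨(0, 0), hn0, Nat.zero_le _⟩ := by
  obtain ⟨⟨i, j⟩, hi, hj⟩ := v
  have down : ∀ j (hj : j ≤ 2 ^ 2 ^ (2 * n) * f n),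
      (Xgraph f n).Reachable ⟨(i, j), hi, hj⟩ ⟨(i, 0), hi, Nat.zero_le _⟩ := by
    intro j
    induction j with
    | zero => intro hj; exact SimpleGraph.Reachable.refl _
    | succ j ih =>
      intro hj
      have hj' : j ≤ 2 ^ 2 ^ (2 * n) * f n := Nat.le_of_succ_le hj
      refine SimpleGraph.Reachable.trans (SimpleGraph.Adj.reachable ?_) (ih hj')
      refine And.intro ?_ (Or.inr (Or.inl ⟨rfl, rfl⟩))
      intro hEq
      exact Nat.succ_ne_self j (congrArg (fun x => x.val.2) hEq)
  have left : ∀ i (hi : i < f n),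
      (Xgraph f n).Reachable ⟨(i, 0), hi, Nat.zero_le _⟩ ⟨(0, 0), hn0, Nat.zero_le _⟩ := by
    intro i
    induction i with
    | zero => intro hi; exact SimpleGraph.Reachable.refl _
    | succ i ih =>
      intro hi
      have hi' : i < f n := Nat.lt_of_succ_lt hi
      refine SimpleGraph.Reachable.trans (SimpleGraph.Adj.reachable ?_) (ih hi')
      refine And.intro ?_ (Or.inr (Or.inr ⟨rfl, dvd_zero _, rfl⟩))
      intro hEq
      exact Nat.succ_ne_self i (congrArg (fun x => x.val.1) hEq)
  exact (down j hj).trans (left i hi)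

lemma wiring_fst_const (g : Wiring (Xgraph f n) (Ytotal f)) {u v : XVert f n}
    (h : (Xgraph f n).Reachable u v) : (g.toFun u).val.1 = (g.toFun v).val.1 := by
  obtain ⟨p⟩ := h
  induction p with
  | nil => rfl
  | cons h _ ih => exact (ytotal_walk_fst (g.walk _ _ h)).trans ih

def xEquiv (f : ℕ → ℕ) (n : ℕ) :
    XVert f n ≃ Fin (f n) × Fin (2 ^ 2 ^ (2 * n) * f n + 1) where
  toFun v := (⟨v.val.1, v.2.1⟩, ⟨v.val.2, Nat.lt_succ_of_le v.2.2⟩)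
  invFun p := ⟨(p.1.1, p.2.1), p.1.2, Nat.lt_succ_iff.mp p.2.2⟩
  left_inv v := rfl
  right_inv p := rfl

lemma aux_pow (n' : ℕ) :
    (n' + 2) * (n' + 2) * ((n' + 2) + 1) < 2 ^ 2 ^ (2 * n' + 3) := by
  have h2 : n' + 2 ≤ 2 ^ (n' + 2) := Nat.le_of_lt (Nat.lt_two_pow_self)
  have h3 : (n' + 2) + 1 ≤ 2 ^ ((n' + 2) + 1) := Nat.le_of_lt (Nat.lt_two_pow_self)
  have hmul : (n' + 2) * (n' + 2) * ((n' + 2) + 1)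
      ≤ 2 ^ (n' + 2) * 2 ^ (n' + 2) * 2 ^ ((n' + 2) + 1) := by
    exact Nat.mul_le_mul (Nat.mul_le_mul h2 h2) h3
  have hpow : 2 ^ (n' + 2) * 2 ^ (n' + 2) * 2 ^ ((n' + 2) + 1) = 2 ^ (3 * n' + 7) := by
    rw [← pow_add, ← pow_add]; ring_nf
  have h4 : n' + 1 ≤ 4 ^ n' :=
    Nat.succ_le_of_lt (lt_of_lt_of_le ((Nat.lt_two_pow_self (n := n'))) (Nat.pow_le_pow_left (by norm_num) n'))
  have e : (2 : ℕ) ^ (2 * n' + 3) = 4 ^ n' * 8 := by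
    rw [pow_add, pow_mul]; norm_num
  have hexp : 3 * n' + 7 < 2 ^ (2 * n' + 3) := by
    calc 3 * n' + 7 < 8 * (n' + 1) := by omega
      _ ≤ 8 * 4 ^ n' := Nat.mul_le_mul_left _ h4
      _ = 4 ^ n' * 8 := Nat.mul_comm _ _
      _ = 2 ^ (2 * n' + 3) := e.symm
  calc (n' + 2) * (n' + 2) * ((n' + 2) + 1) ≤ 2 ^ (3 * n' + 7) := hmul.trans_eq hpow
    _ < 2 ^ 2 ^ (2 * n' + 3) := Nat.pow_lt_pow_right (by norm_num) hexp

end StatementSevenAux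

/-- For `f n ≥ 2`, the image of any coarse `(f n - 1)`-wiring of `X_n`
into `Y` lies in a single connected component `Y_m` of `Y` with `m ≥ n`. -/
theorem statement7
    (f : ℕ → ℕ)
    (hsurj : ∀ k, 1 ≤ k → ∃ n, 1 ≤ n ∧ f n = k)
    (hf1 : f 1 = 1)
    (hf : ∀ n, 2 ≤ n → 2 ≤ f n ∧ f n ≤ n)
    (hinf : ∀ k, 2 ≤ k → {n | f n = k}.Infinite)
    (n : ℕ) (hn : 2 ≤ f n)
    (g : Wiring (Xgraph f n) (Ytotal f)) (hg : g.IsCoarse (f n - 1)) :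
    ∃ m : ℕ, n ≤ m ∧ ∀ w ∈ g.imageVerts, w.val.1 = m := by
  classical
  have hn0 : 0 < f n := lt_of_lt_of_le two_pos hn
  set base : XVert f n := ⟨(0, 0), hn0, Nat.zero_le _⟩ with hbase
  set m : ℕ := (g.toFun base).val.1 with hm
  have himg : ∀ w ∈ g.imageVerts, w.val.1 = m := by
    rintro w (⟨v, rfl⟩ | ⟨u, v, h, hw⟩)
    · exact wiring_fst_const g (x_reach_zero hn0 v)
    · exact (ytotal_support_fst _ w hw).trans (wiring_fst_const g (x_reach_zero hn0 u))
  refine ⟨m, ?_, himg⟩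
  have hm1 : 1 ≤ m := (g.toFun base).property.1
  by_contra hlt
  push_neg at hlt
  have hn2 : 2 ≤ n := by omega
  obtain ⟨n', hnn⟩ : ∃ n', n = n' + 2 := ⟨n - 2, by omega⟩
  -- counting
  haveI : Fintype (XVert f n) := Fintype.ofEquiv _ (xEquiv f n).symm
  have hcardX : Fintype.card (XVert f n) = f n * (2 ^ 2 ^ (2 * n) * f n + 1) := by
    rw [Fintype.card_congr (xEquiv f n), Fintype.card_prod, Fintype.card_fin, Fintype.card_fin]
  set T : Finset (YTVert f) := Finset.univ.image g.toFun with hT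
  have hcount : Fintype.card (XVert f n) ≤ (f n - 1) * T.card := by
    rw [← Finset.card_univ]
    apply Finset.card_le_mul_card_image
    intro w _
    have h1 := hg.1 w
    have heq : {v : XVert f n | g.toFun v = w}
        = ↑(Finset.univ.filter fun v => g.toFun v = w) := by
      ext v; simp
    rw [heq, Set.ncard_coe_finset] at h1
    exact h1
  have hTm : ∀ w ∈ T, w.val.1 = m := by
    intro w hw
    rw [hT, Finset.mem_image] at hw
    obtain ⟨v, _, rfl⟩ := hw
    exact wiring_fst_const g (x_reach_zero hn0 v)
  have hScard : T.card ≤ f m * (2 ^ 2 ^ (2 * m + 1) * f m + 1) := by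
    have hinj : Set.InjOn (fun w : YTVert f => w.val.2) ↑T := by
      intro w hw w' hw' hval
      apply Subtype.ext
      have e1 : w.val.1 = w'.val.1 := (hTm w hw).trans (hTm w' hw').symm
      exact Prod.ext e1 hval
    have hmem : ∀ w ∈ T, w.val.2 ∈
        Finset.range (f m) ×ˢ Finset.range (2 ^ 2 ^ (2 * m + 1) * f m + 1) := by
      intro w hw
      have hw1 := hTm w hw
      have h1 := w.property.2.1
      have h2 := w.property.2.2
      rw [hw1] at h1 h2
      simp only [Finset.mem_product, Finset.mem_range]
      exact ⟨h1, Nat.lt_succ_of_le h2⟩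
    have := Finset.card_le_card_of_injOn (fun w : YTVert f => w.val.2) hmem hinj
    simpa using this
  have hle : f n * (2 ^ 2 ^ (2 * n) * f n + 1)
      ≤ (f n - 1) * (f m * (2 ^ 2 ^ (2 * m + 1) * f m + 1)) := by
    rw [← hcardX]
    exact hcount.trans (Nat.mul_le_mul_left _ hScard)
  -- arithmetic contradiction
  set P : ℕ := 2 ^ 2 ^ (2 * n' + 3) with hP
  have hP1 : 1 ≤ P := Nat.one_le_two_pow
  have hA : 2 ^ 2 ^ (2 * m + 1) ≤ P :=
    Nat.pow_le_pow_right (by norm_num) (Nat.pow_le_pow_right (by norm_num) (by omega))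
  have hB : (2 : ℕ) ^ 2 ^ (2 * n) = P * P := by
    have h1 : 2 * n = (2 * n' + 3) + 1 := by omega
    rw [h1, pow_succ, pow_mul, pow_two]
  have hkn : f n - 1 ≤ n := by have := (hf n (by omega)).2; omega
  have hfmn : f m ≤ n := by
    rcases Nat.lt_or_ge m 2 with h | h
    · have : m = 1 := by omega
      rw [this, hf1]; omega
    · exact le_trans (hf m h).2 (by omega)
  have hkey : n * n * (n + 1) < P := by rw [hnn]; exact aux_pow n'
  have hlt2 : (f n - 1) * (f m * (2 ^ 2 ^ (2 * m + 1) * f m + 1)) < P * P := by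
    calc (f n - 1) * (f m * (2 ^ 2 ^ (2 * m + 1) * f m + 1))
        ≤ n * (n * (P * n + 1)) := by gcongr
      _ ≤ n * (n * (P * n + P)) := by gcongr
      _ = (n * n * (n + 1)) * P := by ring
      _ < P * P := mul_lt_mul_of_pos_right hkey (by omega)
  have hge : P * P < f n * (2 ^ 2 ^ (2 * n) * f n + 1) := by
    rw [hB]
    calc P * P ≤ P * P * f n := Nat.le_mul_of_pos_right _ (by omega)
      _ < P * P * f n + 1 := Nat.lt_succ_self _
      _ ≤ f n * (P * P * f n + 1) := Nat.le_mul_of_pos_left _ (by omega)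
  exact absurd hle (not_le.mpr (hlt2.trans hge))
end
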